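/- arXiv:1403.5906 — 11 statements merged into one kernel-verified Lean document; each statement's English description precedes it below -/
import Mathlib

section
/- The characteristic function of the deterministic newsvendor game is super-additive: for any two disjoint coalitions S1, S2 ⊆ N, v̄(S1) + v̄(S2) ≤ v̄(S1 ∪ S2). -/
open MeasureTheory

/-- Super-additivity of the characteristic function of the deterministic newsvendor game:
for disjoint coalitions `S1`, `S2`, one has `v̄(S1) + v̄(S2) ≤ v̄(S1 ∪ S2)`, where
`v̄(S) = sup_{y ≥ 0} ((p-c)·y - p·E[(y - d̃(S))⁺])`. -/
theorem stmt_0 {ι Ω : Type*} [Fintype ι] [DecidableEq ι] [MeasurableSpace Ω]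
    (μ : Measure Ω) [IsProbabilityMeasure μ]
    (p c : ℝ) (hc : 0 < c) (hcp : c < p)
    (d : ι → Ω → ℝ) (hd0 : ∀ i ω, 0 ≤ d i ω)
    (hdi : ∀ i, Integrable (d i) μ)
    (S1 S2 : Finset ι) (hdisj : Disjoint S1 S2) :
    (⨆ y : {y : ℝ // 0 ≤ y}, ((p - c) * y.1 - p * ∫ ω, max (y.1 - ∑ i ∈ S1, d i ω) 0 ∂μ)) +
      (⨆ y : {y : ℝ // 0 ≤ y}, ((p - c) * y.1 - p * ∫ ω, max (y.1 - ∑ i ∈ S2, d i ω) 0 ∂μ)) ≤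
    ⨆ y : {y : ℝ // 0 ≤ y}, ((p - c) * y.1 - p * ∫ ω, max (y.1 - ∑ i ∈ S1 ∪ S2, d i ω) 0 ∂μ) := by
  have hp : 0 < p := hc.trans hcp
  -- integrability of coalition demands
  have hSint : ∀ S : Finset ι, Integrable (fun ω => ∑ i ∈ S, d i ω) μ := fun S =>
    integrable_finset_sum S (fun i _ => hdi i)
  have hmax : ∀ (S : Finset ι) (y : ℝ),
      Integrable (fun ω => max (y - ∑ i ∈ S, d i ω) 0) μ := fun S y =>
    ((integrable_const y).sub (hSint S)).pos_part
  -- the value function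
  set f : Finset ι → {y : ℝ // 0 ≤ y} → ℝ := fun S y =>
    (p - c) * y.1 - p * ∫ ω, max (y.1 - ∑ i ∈ S, d i ω) 0 ∂μ with hf
  -- boundedness above
  have hbdd : ∀ S : Finset ι, BddAbove (Set.range (f S)) := by
    intro S
    refine ⟨p * ∫ ω, ∑ i ∈ S, d i ω ∂μ, ?_⟩
    rintro _ ⟨y, rfl⟩
    have h1 : (y.1 - ∫ ω, ∑ i ∈ S, d i ω ∂μ) ≤ ∫ ω, max (y.1 - ∑ i ∈ S, d i ω) 0 ∂μ := by
      have : ∫ ω, (y.1 - ∑ i ∈ S, d i ω) ∂μ ≤ ∫ ω, max (y.1 - ∑ i ∈ S, d i ω) 0 ∂μ :=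
        integral_mono ((integrable_const y.1).sub (hSint S)) (hmax S y.1)
          (fun ω => le_max_left _ _)
      rwa [integral_sub (integrable_const y.1) (hSint S), integral_const,
        probReal_univ, smul_eq_mul, one_mul] at this
    have hy := y.2
    simp only [hf]
    nlinarith [h1]
  have hne : Nonempty {y : ℝ // 0 ≤ y} := ⟨⟨0, le_refl 0⟩⟩
  -- key pointwise/integral inequality
  have key : ∀ (y1 y2 : {y : ℝ // 0 ≤ y}),
      f S1 y1 + f S2 y2 ≤ f (S1 ∪ S2) ⟨y1.1 + y2.1, add_nonneg y1.2 y2.2⟩ := by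
    intro y1 y2
    have hint : ∫ ω, max (y1.1 + y2.1 - ∑ i ∈ S1 ∪ S2, d i ω) 0 ∂μ ≤
        (∫ ω, max (y1.1 - ∑ i ∈ S1, d i ω) 0 ∂μ) +
        (∫ ω, max (y2.1 - ∑ i ∈ S2, d i ω) 0 ∂μ) := by
      rw [← integral_add (hmax S1 y1.1) (hmax S2 y2.1)]
      refine integral_mono (hmax (S1 ∪ S2) _) ((hmax S1 y1.1).add (hmax S2 y2.1)) ?_
      intro ω
      have hsum : ∑ i ∈ S1 ∪ S2, d i ω = (∑ i ∈ S1, d i ω) + ∑ i ∈ S2, d i ω :=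
        Finset.sum_union hdisj
      simp only [hsum]
      rcases le_total (y1.1 + y2.1 - ((∑ i ∈ S1, d i ω) + ∑ i ∈ S2, d i ω)) 0 with h | h
      · calc max _ 0 = 0 := max_eq_right h
          _ ≤ _ := add_nonneg (le_max_right _ _) (le_max_right _ _)
      · calc max (y1.1 + y2.1 - ((∑ i ∈ S1, d i ω) + ∑ i ∈ S2, d i ω)) 0
            = (y1.1 - ∑ i ∈ S1, d i ω) + (y2.1 - ∑ i ∈ S2, d i ω) := by
              rw [max_eq_left h]; ring
          _ ≤ _ := add_le_add (le_max_left _ _) (le_max_left _ _)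
    simp only [hf]
    nlinarith [hint]
  -- combine
  have hstep : ∀ y1 y2 : {y : ℝ // 0 ≤ y},
      f S1 y1 + f S2 y2 ≤ ⨆ y, f (S1 ∪ S2) y := fun y1 y2 =>
    le_trans (key y1 y2) (le_ciSup (hbdd (S1 ∪ S2)) _)
  have h1 : (⨆ y, f S1 y) ≤ (⨆ y, f (S1 ∪ S2) y) - ⨆ y, f S2 y := by
    refine ciSup_le fun y1 => ?_
    have h2 : (⨆ y, f S2 y) ≤ (⨆ y, f (S1 ∪ S2) y) - f S1 y1 :=
      ciSup_le fun y2 => by linarith [hstep y1 y2]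
    linarith
  linarith
end

section
/- A robust cooperative game (N, A, V(U)) has an imputation if and only if there exists an action a ∈ A(N) such that Σ_{i∈N} v_max(a,{i}) ≤ 1, where v_max(a,{i}) = max_{u∈U} (max_{α∈A({i})} v_u(α,{i})) / v_u(a,N). -/
/-- A robust cooperative game has an imputation iff there is an action `a ∈ A(N)` with
`∑_i v_max(a,{i}) ≤ 1`, where `v_max(a,{i}) = max_u (max_{b ∈ A{i}} v_u(b,{i})) / v_u(a,N)`. -/
theorem stmt_4 {ι α U : Type*} [Fintype ι] [Nonempty ι] [Fintype U] [Nonempty U]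
    (A : Finset ι → Finset α) (hA : ∀ S, (A S).Nonempty)
    (v : α → Finset ι → U → ℝ)
    (hind : ∀ i : ι, ∃ b ∈ A {i}, ∀ u : U, 0 ≤ v b {i} u)
    (hpos : ∀ a ∈ A Finset.univ, ∀ u : U, 0 < v a Finset.univ u) :
    (∃ a ∈ A Finset.univ, ∃ z : ι → ℝ, (∑ i, z i) = 1 ∧
        ∀ i : ι, ¬ ∃ b ∈ A {i}, ∃ u : U, v a Finset.univ u * z i < v b {i} u) ↔
      (∃ a ∈ A Finset.univ,
        ∑ i : ι, (⨆ u : U, (⨆ b : A {i}, v (↑b) {i} u) / v a Finset.univ u) ≤ 1) := by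
  have hne : ∀ i : ι, Nonempty (A {i}) := fun i => (hA {i}).to_subtype
  constructor
  · rintro ⟨a, ha, z, hz, hno⟩
    refine ⟨a, ha, ?_⟩
    calc ∑ i : ι, (⨆ u : U, (⨆ b : A {i}, v (↑b) {i} u) / v a Finset.univ u)
        ≤ ∑ i : ι, z i := by
          apply Finset.sum_le_sum
          intro i _
          apply ciSup_le
          intro u
          rw [div_le_iff₀ (hpos a ha u)]
          apply ciSup_le
          intro b
          have h := hno i
          push_neg at h
          have := h b b.2 u
          linarith
      _ = 1 := hz
  · rintro ⟨a, ha, hsum⟩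
    set M : ι → ℝ := fun i => ⨆ u : U, (⨆ b : A {i}, v (↑b) {i} u) / v a Finset.univ u with hM
    set c : ℝ := (1 - ∑ i, M i) / Fintype.card ι with hc
    have hcard : (0 : ℝ) < Fintype.card ι := by
      exact_mod_cast Fintype.card_pos
    have hc0 : 0 ≤ c := by
      apply div_nonneg _ hcard.le
      linarith
    refine ⟨a, ha, fun i => M i + c, ?_, ?_⟩
    · rw [Finset.sum_add_distrib, Finset.sum_const, Finset.card_univ, nsmul_eq_mul, hc]
      field_simp
      ring
    · intro i
      rintro ⟨b, hb, u, hlt⟩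
      have h1 : v b {i} u / v a Finset.univ u ≤ M i := by
        refine le_trans ?_ (le_ciSup (Set.Finite.bddAbove (Set.finite_range _)) u)
        have hb' : v b {i} u ≤ ⨆ b' : A {i}, v (↑b') {i} u :=
          le_ciSup (Set.Finite.bddAbove (Set.finite_range fun b' : A {i} => v (↑b') {i} u))
            (⟨b, hb⟩ : A {i})
        gcongr
        exact (hpos a ha u).le
      rw [div_le_iff₀ (hpos a ha u)] at h1
      have h2 : v a Finset.univ u * M i ≤ v a Finset.univ u * (M i + c) := by
        have := (hpos a ha u).le
        nlinarith
      have hlt' : v a Finset.univ u * (M i + c) < v b {i} u := hlt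
      linarith
end

section
/- In a robust cooperative game, given an imputation (a, z), a coalition S ⊊ N has the incentive to break away if and only if Σ_{i∈S} z_i < v_max(a,S), where v_max(a,S) = max_{u∈U} (max_{α∈A(S)} v_u(α,S)) / v_u(a,N). -/
/-- Coalition break-away lemma for robust cooperative games: given an imputation `(a, z)`,
a coalition `S ⊊ N` has the incentive to break away iff `∑_{i ∈ S} z i < v_max(a, S)`. -/
theorem stmt_5 {ι α U : Type*} [Fintype ι] [Nonempty ι] [Fintype U] [Nonempty U]
    (A : Finset ι → Finset α) (hA : ∀ S, (A S).Nonempty)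
    (v : α → Finset ι → U → ℝ)
    (hind : ∀ i : ι, ∃ b ∈ A {i}, ∀ u : U, 0 ≤ v b {i} u)
    (hpos : ∀ a ∈ A Finset.univ, ∀ u : U, 0 < v a Finset.univ u)
    (a : α) (ha : a ∈ A Finset.univ)
    (z : ι → ℝ) (hz : ∑ i, z i = 1)
    (himp : ∀ i : ι, (⨆ u : U, (⨆ b : A {i}, v (↑b) {i} u) / v a Finset.univ u) ≤ z i)
    (S : Finset ι) (hSne : S.Nonempty) (hS : S ⊂ Finset.univ) :
    (∃ b ∈ A S, ∃ zh : ι → ℝ, (∑ i ∈ S, zh i) = 1 ∧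
        ∃ u : U, ∀ i ∈ S, v a Finset.univ u * z i < v b S u * zh i) ↔
      (∑ i ∈ S, z i) < ⨆ u : U, (⨆ b : A S, v (↑b) S u) / v a Finset.univ u := by
  haveI : Nonempty (A S) := (hA S).to_subtype
  constructor
  · rintro ⟨b, hb, zh, hzh, u, hu⟩
    have hvN : 0 < v a Finset.univ u := hpos a ha u
    have hsum : v a Finset.univ u * ∑ i ∈ S, z i < v b S u := by
      calc v a Finset.univ u * ∑ i ∈ S, z i
          = ∑ i ∈ S, v a Finset.univ u * z i := by rw [Finset.mul_sum]
        _ < ∑ i ∈ S, v b S u * zh i := Finset.sum_lt_sum_of_nonempty hSne hu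
        _ = v b S u * ∑ i ∈ S, zh i := by rw [Finset.mul_sum]
        _ = v b S u := by rw [hzh, mul_one]
    have h1 : (∑ i ∈ S, z i) < v b S u / v a Finset.univ u := by
      rw [lt_div_iff₀ hvN]; linarith [hsum]
    have h2 : v b S u / v a Finset.univ u ≤ (⨆ c : A S, v (↑c) S u) / v a Finset.univ u := by
      gcongr
      exact le_ciSup (f := fun c : A S => v (↑c) S u) (Set.Finite.bddAbove (Set.finite_range _)) (⟨b, hb⟩ : A S)
    have h3 : (⨆ c : A S, v (↑c) S u) / v a Finset.univ u ≤
        ⨆ u' : U, (⨆ c : A S, v (↑c) S u') / v a Finset.univ u' :=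
      le_ciSup (f := fun u' : U => (⨆ c : A S, v (↑c) S u') / v a Finset.univ u')
        (Set.Finite.bddAbove (Set.finite_range _)) u
    linarith
  · intro hlt
    obtain ⟨u, hu⟩ := Finite.exists_max
      (fun u : U => (⨆ c : A S, v (↑c) S u) / v a Finset.univ u)
    have hsupU : (⨆ u' : U, (⨆ c : A S, v (↑c) S u') / v a Finset.univ u') ≤
        (⨆ c : A S, v (↑c) S u) / v a Finset.univ u := ciSup_le hu
    obtain ⟨b₀, hb₀⟩ := Finite.exists_max (fun c : A S => v (↑c) S u)
    have hsupB : (⨆ c : A S, v (↑c) S u) ≤ v (↑b₀) S u := ciSup_le hb₀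
    have hvN : 0 < v a Finset.univ u := hpos a ha u
    have hkey : (∑ i ∈ S, z i) < v (↑b₀) S u / v a Finset.univ u := by
      calc (∑ i ∈ S, z i) < _ := hlt
        _ ≤ (⨆ c : A S, v (↑c) S u) / v a Finset.univ u := hsupU
        _ ≤ v (↑b₀) S u / v a Finset.univ u := by gcongr
    have hz0 : ∀ i : ι, 0 ≤ z i := by
      intro i
      refine le_trans ?_ (himp i)
      obtain ⟨c, hc, hcnn⟩ := hind i
      haveI : Nonempty (A ({i} : Finset ι)) := (hA _).to_subtype
      have h1 : (0 : ℝ) ≤ (⨆ b : A ({i} : Finset ι), v (↑b) {i} u) / v a Finset.univ u := by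
        apply div_nonneg _ hvN.le
        exact le_trans (hcnn u)
          (le_ciSup (f := fun b : A ({i} : Finset ι) => v (↑b) {i} u)
            (Set.Finite.bddAbove (Set.finite_range _)) (⟨c, hc⟩ : A ({i} : Finset ι)))
      exact le_trans h1
        (le_ciSup (f := fun u' : U => (⨆ b : A ({i} : Finset ι), v (↑b) {i} u') / v a Finset.univ u')
          (Set.Finite.bddAbove (Set.finite_range _)) u)
    have hSz : 0 ≤ ∑ i ∈ S, z i := Finset.sum_nonneg fun i _ => hz0 i
    have hkey' : v a Finset.univ u * ∑ i ∈ S, z i < v (↑b₀) S u := by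
      rw [lt_div_iff₀ hvN] at hkey; linarith
    have hvb : 0 < v (↑b₀) S u := lt_of_le_of_lt (by positivity) hkey'
    set n : ℝ := (S.card : ℝ) with hn
    have hnpos : 0 < n := by
      rw [hn]; exact_mod_cast Finset.card_pos.mpr hSne
    set ε : ℝ := (v (↑b₀) S u - v a Finset.univ u * ∑ i ∈ S, z i) / n with hε
    have hεpos : 0 < ε := div_pos (by linarith) hnpos
    refine ⟨↑b₀, b₀.2, fun i => (v a Finset.univ u * z i + ε) / v (↑b₀) S u, ?_, u, ?_⟩
    · rw [← Finset.sum_div, div_eq_one_iff_eq hvb.ne']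
      rw [Finset.sum_add_distrib, ← Finset.mul_sum, Finset.sum_const, nsmul_eq_mul, hε]
      field_simp
      rw [hn]; ring
    · intro i hi
      rw [mul_div_assoc', mul_div_cancel_left₀ _ hvb.ne']
      linarith
end

section
/- A robust cooperative game has a non-empty core if and only if it is balanced, i.e., there exists an action a ∈ A(N) such that for every balanced map μ: 2^N\{∅} → [0,∞) with Σ_{S⊊N} μ(S)·e_S = e_N, one has Σ_{S⊊N} μ(S)·v_max(a,S) ≤ 1. -/
open Finset

lemma cara_aux {E : Type*} [AddCommGroup E] [Module ℝ E] {κ : Type*} [Fintype κ] (g : κ → E) :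
    ∀ (n : ℕ) (t : κ → ℝ), ((univ : Finset κ).filter fun j => t j ≠ 0).card ≤ n →
      (∀ j, 0 ≤ t j) →
      ∃ t' : κ → ℝ, (∀ j, 0 ≤ t' j) ∧
        LinearIndependent ℝ (fun j : {j // t' j ≠ 0} => g j) ∧
        ∑ j, t' j • g j = ∑ j, t j • g j := by
  classical
  intro n
  induction n with
  | zero =>
    intro t hcard ht
    refine ⟨t, ht, ?_, rfl⟩
    have hempty : ∀ j, t j = 0 := by
      intro j
      by_contra hj
      have : j ∈ (univ : Finset κ).filter fun j => t j ≠ 0 := by simp [hj]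
      have := card_pos.mpr ⟨j, this⟩
      omega
    have : IsEmpty {j // t j ≠ 0} := ⟨fun ⟨j, hj⟩ => hj (hempty j)⟩
    exact linearIndependent_empty_type
  | succ n ih =>
    intro t hcard ht
    by_cases hli : LinearIndependent ℝ (fun j : {j // t j ≠ 0} => g j)
    · exact ⟨t, ht, hli, rfl⟩
    · obtain ⟨c, hc0, j₁, hj₁⟩ := Fintype.not_linearIndependent_iff.mp hli
      -- extend c to κ
      set C : κ → ℝ := fun j => if h : t j ≠ 0 then c ⟨j, h⟩ else 0 with hC
      have hCsum : ∑ j, C j • g j = 0 := by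
        have e1 : ∑ j ∈ (univ.filter fun j => t j ≠ 0), C j • g j
            = ∑ x : {j // t j ≠ 0}, C x.1 • g x.1 :=
          Finset.sum_subtype _ (by simp) _
        have e2 : ∑ x : {j // t j ≠ 0}, C x.1 • g x.1 = ∑ x : {j // t j ≠ 0}, c x • g x.1 :=
          Finset.sum_congr rfl fun ⟨j, hj⟩ _ => by simp [hC, hj]
        have e3 : ∑ j, C j • g j = ∑ j ∈ (univ.filter fun j => t j ≠ 0), C j • g j := by
          refine (Finset.sum_subset (filter_subset _ _) ?_).symm
          intro j _ hj
          simp only [mem_filter, mem_univ, true_and] at hj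
          push_neg at hj
          simp [hC, hj]
        rw [e3, e1, e2, hc0]
      have hCsupp : ∀ j, t j = 0 → C j = 0 := fun j hj => by simp [hC, hj]
      have hCne : C j₁.1 ≠ 0 := by simp [hC, j₁.2, hj₁]
      -- get D with a positive entry
      obtain ⟨D, hDsum, hDsupp, jD, hjD⟩ :
          ∃ D : κ → ℝ, ∑ j, D j • g j = 0 ∧ (∀ j, t j = 0 → D j = 0) ∧ ∃ j, 0 < D j := by
        rcases lt_or_gt_of_ne hCne with h | h
        · exact ⟨-C, by simp [hCsum], fun j hj => by simp [hCsupp j hj], j₁.1, by simpa using h⟩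
        · exact ⟨C, hCsum, hCsupp, j₁.1, h⟩
      set F := (univ : Finset κ).filter fun j => 0 < D j with hF
      have hFne : F.Nonempty := ⟨jD, by simp [hF, hjD]⟩
      obtain ⟨j₀, hj₀F, hj₀min⟩ := F.exists_min_image (fun j => t j / D j) hFne
      have hDj₀ : 0 < D j₀ := by simpa [hF] using hj₀F
      set lam := t j₀ / D j₀ with hlam
      have hlam0 : 0 ≤ lam := div_nonneg (ht j₀) hDj₀.le
      set t'' : κ → ℝ := fun j => t j - lam * D j with ht''
      have ht''0 : ∀ j, 0 ≤ t'' j := by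
        intro j
        by_cases hD : 0 < D j
        · have : lam ≤ t j / D j := hj₀min j (by simp [hF, hD])
          have := (le_div_iff₀ hD).mp this
          simp [ht'']; linarith
        · push_neg at hD
          have : lam * D j ≤ 0 := mul_nonpos_of_nonneg_of_nonpos hlam0 hD
          have := ht j
          simp [ht'']; linarith
      have ht''j₀ : t'' j₀ = 0 := by
        simp [ht'', hlam, div_mul_cancel₀ _ hDj₀.ne']
      have ht''supp : ∀ j, t j = 0 → t'' j = 0 := by
        intro j hj
        simp [ht'', hj, hDsupp j hj]
      have hj₀mem : j₀ ∈ (univ : Finset κ).filter fun j => t j ≠ 0 := by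
        simp only [mem_filter, mem_univ, true_and]
        intro h0
        exact hDj₀.ne' (hDsupp j₀ h0)
      have hsub : ((univ : Finset κ).filter fun j => t'' j ≠ 0) ⊆
          ((univ : Finset κ).filter fun j => t j ≠ 0).erase j₀ := by
        intro j hj
        simp only [mem_filter, mem_univ, true_and] at hj
        rw [mem_erase]
        refine ⟨?_, by simp only [mem_filter, mem_univ, true_and]; exact fun h => hj (ht''supp j h)⟩
        rintro rfl; exact hj ht''j₀
      have hcard'' : ((univ : Finset κ).filter fun j => t'' j ≠ 0).card ≤ n := by
        have h1 := card_le_card hsub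
        have h2 := card_erase_of_mem hj₀mem
        omega
      have hsum'' : ∑ j, t'' j • g j = ∑ j, t j • g j := by
        simp only [ht'', sub_smul, Finset.sum_sub_distrib, mul_smul]
        rw [← Finset.smul_sum, hDsum, smul_zero, sub_zero]
      obtain ⟨t', h1, h2, h3⟩ := ih t'' hcard'' ht''0
      exact ⟨t', h1, h2, h3.trans hsum''⟩

lemma isClosed_fg_cone {E : Type*} [NormedAddCommGroup E] [NormedSpace ℝ E]
    [FiniteDimensional ℝ E] {κ : Type*} [Fintype κ] (g : κ → E) :
    IsClosed {x : E | ∃ t : κ → ℝ, (∀ j, 0 ≤ t j) ∧ ∑ j, t j • g j = x} := by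
  classical
  have key : {x : E | ∃ t : κ → ℝ, (∀ j, 0 ≤ t j) ∧ ∑ j, t j • g j = x} =
      ⋃ J : Finset κ,
        (if LinearIndependent ℝ (fun j : J => g j) then
          {x : E | ∃ t : κ → ℝ, (∀ j, 0 ≤ t j) ∧ (∀ j ∉ J, t j = 0) ∧ ∑ j, t j • g j = x}
        else ∅) := by
    ext x
    simp only [Set.mem_setOf_eq, Set.mem_iUnion]
    constructor
    · rintro ⟨t, ht, hsum⟩
      obtain ⟨t', ht'0, ht'li, ht'sum⟩ := cara_aux g _ t le_rfl ht
      refine ⟨(univ : Finset κ).filter fun j => t' j ≠ 0, ?_⟩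
      have hli : LinearIndependent ℝ
          (fun j : ((univ : Finset κ).filter fun j => t' j ≠ 0) => g j) := by
        exact ht'li.comp
          (fun x : ((univ : Finset κ).filter fun j => t' j ≠ 0 : Finset κ) =>
            (⟨x.1, (Finset.mem_filter.mp x.2).2⟩ : {j // t' j ≠ 0}))
          (fun a b hab => by have h := congrArg (fun y : {j // t' j ≠ 0} => y.1) hab; exact Subtype.ext h)
      rw [if_pos hli]
      exact ⟨t', ht'0, fun j hj => by simpa using hj, ht'sum.trans hsum⟩
    · rintro ⟨J, hJ⟩
      by_cases hli : LinearIndependent ℝ (fun j : J => g j)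
      · rw [if_pos hli] at hJ
        obtain ⟨t, ht, _, hsum⟩ := hJ
        exact ⟨t, ht, hsum⟩
      · rw [if_neg hli] at hJ
        exact hJ.elim
  rw [key]
  refine isClosed_iUnion_of_finite fun J => ?_
  by_cases hli : LinearIndependent ℝ (fun j : J => g j)
  · rw [if_pos hli]
    set L : (J → ℝ) →ₗ[ℝ] E := Fintype.linearCombination ℝ (fun j : J => g j) with hL
    have hLapp : ∀ f : J → ℝ, L f = ∑ j : J, f j • g j := fun f => rfl
    have hker : LinearMap.ker L = ⊥ := by
      rw [LinearMap.ker_eq_bot']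
      intro f hf
      rw [hLapp] at hf
      exact funext (Fintype.linearIndependent_iff.mp hli f hf)
    have hemb : Topology.IsClosedEmbedding L := LinearMap.isClosedEmbedding_of_injective hker
    have horth : IsClosed {f : J → ℝ | ∀ j, 0 ≤ f j} := by
      have : {f : J → ℝ | ∀ j, 0 ≤ f j} = ⋂ j, {f : J → ℝ | 0 ≤ f j} := by
        ext f; simp [Set.mem_iInter]
      rw [this]
      exact isClosed_iInter fun j => isClosed_le continuous_const (continuous_apply j)
    have himg : {x : E | ∃ t : κ → ℝ, (∀ j, 0 ≤ t j) ∧ (∀ j ∉ J, t j = 0) ∧ ∑ j, t j • g j = x}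
        = L '' {f : J → ℝ | ∀ j, 0 ≤ f j} := by
      ext x
      simp only [Set.mem_setOf_eq, Set.mem_image]
      constructor
      · rintro ⟨t, ht0, htsupp, hsum⟩
        refine ⟨fun j => t j, fun j => ht0 j, ?_⟩
        rw [hLapp]
        rw [← hsum]
        rw [← Finset.sum_subtype J (p := fun j => j ∈ J) (fun j => Iff.rfl) (fun j => t j • g j)]
        exact Finset.sum_subset (Finset.subset_univ _)
          (fun j _ hj => by rw [htsupp j hj, zero_smul])
      · rintro ⟨f, hf, hfx⟩
        refine ⟨fun j => if h : j ∈ J then f ⟨j, h⟩ else 0, ?_, ?_, ?_⟩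
        · intro j
          by_cases h : j ∈ J
          · simpa [h] using hf ⟨j, h⟩
          · simp [h]
        · intro j hj; simp [hj]
        · rw [← hfx, hLapp]
          rw [← Finset.sum_subset (Finset.subset_univ J) (f := fun j =>
              (if h : j ∈ J then f ⟨j, h⟩ else 0) • g j)
              (fun j _ hj => by simp [hj])]
          rw [Finset.sum_subtype J (p := fun j => j ∈ J) (fun j => Iff.rfl)]
          exact Finset.sum_congr rfl fun ⟨j, hj⟩ _ => by simp [hj]
    rw [himg]
    exact hemb.isClosedMap _ horth
  · rw [if_neg hli]
    exact isClosed_empty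

lemma farkas {κ ι : Type*} [Fintype κ] [Fintype ι]
    (w : κ → ι → ℝ) (c : κ → ℝ)
    (h : ∀ μ : κ → ℝ, (∀ k, 0 ≤ μ k) → (∀ i, ∑ k, μ k * w k i = 0) →
      ∑ k, μ k * c k ≤ 0) :
    ∃ z : ι → ℝ, ∀ k, c k ≤ ∑ i, w k i * z i := by
  classical
  set G : (ι ⊕ ι ⊕ κ) → (κ → ℝ) := fun j => match j with
    | Sum.inl i => fun k => w k i
    | Sum.inr (Sum.inl i) => fun k => -w k i
    | Sum.inr (Sum.inr k₀) => fun k => -(if k = k₀ then 1 else 0) with hG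
  set C : Set (κ → ℝ) := {x | ∃ t : ι ⊕ ι ⊕ κ → ℝ, (∀ j, 0 ≤ t j) ∧ ∑ j, t j • G j = x}
    with hCdef
  have hGval : ∀ (t : ι ⊕ ι ⊕ κ → ℝ) (k : κ), (∑ j, t j • G j) k
      = ∑ i, w k i * (t (Sum.inl i) - t (Sum.inr (Sum.inl i))) - t (Sum.inr (Sum.inr k)) := by
    intro t k
    rw [Finset.sum_apply]
    simp only [Pi.smul_apply, smul_eq_mul, hG]
    rw [Fintype.sum_sum_type, Fintype.sum_sum_type]
    have e3 : ∑ k', t (Sum.inr (Sum.inr k')) * -(if k = k' then (1:ℝ) else 0)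
        = -t (Sum.inr (Sum.inr k)) := by
      rw [Finset.sum_eq_single k]
      · simp
      · intro b _ hb
        simp [Ne.symm hb]
      · simp
    rw [e3]
    have e4 : ∑ i, w k i * (t (Sum.inl i) - t (Sum.inr (Sum.inl i)))
        = ∑ i, t (Sum.inl i) * w k i + ∑ i, t (Sum.inr (Sum.inl i)) * -w k i := by
      rw [← Finset.sum_add_distrib]
      exact Finset.sum_congr rfl fun i _ => by ring
    rw [e4]; ring
  have hclosed : IsClosed C := isClosed_fg_cone G
  have hconvex : Convex ℝ C := by
    rintro x ⟨t, ht, hsum⟩ y ⟨t', ht', hsum'⟩ a b ha hb _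
    refine ⟨fun j => a * t j + b * t' j,
      fun j => add_nonneg (mul_nonneg ha (ht j)) (mul_nonneg hb (ht' j)), ?_⟩
    simp only [add_smul, mul_smul, Finset.sum_add_distrib, ← Finset.smul_sum, hsum, hsum']
  have h0C : (0 : κ → ℝ) ∈ C := ⟨0, fun j => le_rfl, by simp⟩
  have hgen : ∀ j₀, G j₀ ∈ C := by
    intro j₀
    refine ⟨fun j => if j = j₀ then 1 else 0, fun j => by positivity, ?_⟩
    simp [ite_smul]
  have hcone : ∀ x ∈ C, ∀ r : ℝ, 0 ≤ r → r • x ∈ C := by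
    rintro x ⟨t, ht, hsum⟩ r hr
    refine ⟨fun j => r * t j, fun j => mul_nonneg hr (ht j), ?_⟩
    simp only [mul_smul, ← Finset.smul_sum, hsum]
  by_cases hc : c ∈ C
  · obtain ⟨t, ht, hsum⟩ := hc
    refine ⟨fun i => t (Sum.inl i) - t (Sum.inr (Sum.inl i)), fun k => ?_⟩
    have hv := hGval t k
    rw [hsum] at hv
    have h2 := ht (Sum.inr (Sum.inr k))
    show c k ≤ ∑ i, w k i * (t (Sum.inl i) - t (Sum.inr (Sum.inl i)))
    rw [hv]
    linarith
  · exfalso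
    obtain ⟨f, u, hfc, hfC⟩ := geometric_hahn_banach_point_closed hconvex hclosed hc
    have hu0 : u < 0 := by
      have := hfC 0 h0C
      rwa [map_zero] at this
    have hfnonneg : ∀ x ∈ C, 0 ≤ f x := by
      intro x hx
      by_contra hneg
      push_neg at hneg
      have hr : 0 ≤ u / f x := (div_pos_of_neg_of_neg hu0 hneg).le
      have := hfC _ (hcone x hx _ hr)
      rw [map_smul, smul_eq_mul, div_mul_cancel₀ _ hneg.ne] at this
      exact lt_irrefl u this
    have hrep : ∀ x : κ → ℝ, f x = ∑ k, x k * f (Pi.single k 1) := by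
      intro x
      have hx : x = ∑ k, x k • (Pi.single k 1 : κ → ℝ) := by
        funext j
        simp [Finset.sum_apply, Pi.single_apply]
      conv_lhs => rw [hx]
      rw [map_sum]
      exact Finset.sum_congr rfl fun k _ => by rw [map_smul, smul_eq_mul]
    set μ : κ → ℝ := fun k => -f (Pi.single k 1) with hμ
    have hμ0 : ∀ k, 0 ≤ μ k := by
      intro k
      have hGk : G (Sum.inr (Sum.inr k)) = -Pi.single k 1 := by
        funext k'
        simp [hG, Pi.single_apply]
      have := hfnonneg _ (hgen (Sum.inr (Sum.inr k)))
      rw [hGk, map_neg] at this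
      simpa [hμ] using this
    have hμw : ∀ i, ∑ k, μ k * w k i = 0 := by
      intro i
      have h1 := hfnonneg _ (hgen (Sum.inl i))
      have h2 := hfnonneg _ (hgen (Sum.inr (Sum.inl i)))
      have hGneg : G (Sum.inr (Sum.inl i)) = -G (Sum.inl i) := by
        funext k'; simp [hG]
      rw [hGneg, map_neg] at h2
      have hzero : f (G (Sum.inl i)) = 0 := le_antisymm (by linarith) h1
      have hv := hrep (G (Sum.inl i))
      rw [hzero] at hv
      have hv2 : (0:ℝ) = ∑ k, w k i * f (Pi.single k 1) := by simpa [hG] using hv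
      have hv3 : ∑ k, μ k * w k i = -(∑ k, w k i * f (Pi.single k 1)) := by
        rw [← Finset.sum_neg_distrib]
        exact Finset.sum_congr rfl fun k _ => by simp [hμ]; ring
      rw [hv3, ← hv2, neg_zero]
    have hsum_le := h μ hμ0 hμw
    have hfin : ∑ k, μ k * c k = -f c := by
      rw [hrep c, ← Finset.sum_neg_distrib]
      exact Finset.sum_congr rfl fun k _ => by simp [hμ]; ring
    rw [hfin] at hsum_le
    linarith

open Classical in
/-- A robust cooperative game has a non-empty core iff it is balanced: there is an action
`a ∈ A(N)` such that every balanced map `μ` (with `∑_{S ⊊ N} μ(S)·e_S = e_N`) satisfies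
`∑_{S ⊊ N} μ(S)·v_max(a,S) ≤ 1`. -/
theorem stmt_6 {ι α U : Type*} [Fintype ι] [Nonempty ι] [Fintype U] [Nonempty U]
    (A : Finset ι → Finset α) (hA : ∀ S, (A S).Nonempty)
    (v : α → Finset ι → U → ℝ)
    (hind : ∀ i : ι, ∃ b ∈ A {i}, ∀ u : U, 0 ≤ v b {i} u)
    (hpos : ∀ a ∈ A Finset.univ, ∀ u : U, 0 < v a Finset.univ u) :
    (∃ a ∈ A Finset.univ, ∃ z : ι → ℝ, (∑ i, z i) = 1 ∧
        ∀ S : Finset ι, S.Nonempty → S ⊂ Finset.univ →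
          (⨆ u : U, (⨆ b : A S, v (↑b) S u) / v a Finset.univ u) ≤ ∑ i ∈ S, z i) ↔
      (∃ a ∈ A Finset.univ, ∀ μ : Finset ι → ℝ, (∀ S, 0 ≤ μ S) →
        (∀ i : ι,
          ∑ S ∈ Finset.univ.filter (fun S : Finset ι => i ∈ S ∧ S ⊂ Finset.univ), μ S = 1) →
        ∑ S ∈ Finset.univ.filter (fun S : Finset ι => S.Nonempty ∧ S ⊂ Finset.univ),
          μ S * (⨆ u : U, (⨆ b : A S, v (↑b) S u) / v a Finset.univ u) ≤ 1) := by
  classical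
  constructor
  · -- core nonempty → balanced
    rintro ⟨a, ha, z, hz1, hz2⟩
    refine ⟨a, ha, fun μ hμ0 hμb => ?_⟩
    set F := Finset.univ.filter (fun S : Finset ι => S.Nonempty ∧ S ⊂ Finset.univ) with hF
    have step1 : ∑ S ∈ F, μ S * (⨆ u : U, (⨆ b : A S, v (↑b) S u) / v a Finset.univ u)
        ≤ ∑ S ∈ F, μ S * ∑ i ∈ S, z i := by
      refine Finset.sum_le_sum fun S hS => ?_
      simp only [hF, Finset.mem_filter] at hS
      exact mul_le_mul_of_nonneg_left (hz2 S hS.2.1 hS.2.2) (hμ0 S)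
    have inner : ∀ S : Finset ι, μ S * ∑ i ∈ S, z i
        = ∑ i, (if i ∈ S then μ S * z i else 0) := by
      intro S
      rw [Finset.mul_sum]
      have h1 : ∑ i ∈ S, μ S * z i = ∑ i ∈ S, (if i ∈ S then μ S * z i else 0) :=
        Finset.sum_congr rfl fun i hi => (if_pos hi).symm
      rw [h1]
      exact Finset.sum_subset (Finset.subset_univ S) (fun i _ hi => if_neg hi)
    have step2 : ∑ S ∈ F, μ S * ∑ i ∈ S, z i = 1 := by
      rw [Finset.sum_congr rfl fun S _ => inner S]
      rw [Finset.sum_comm]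
      have step3 : ∀ i : ι, ∑ S ∈ F, (if i ∈ S then μ S * z i else 0) = z i := by
        intro i
        have e1 : ∑ S ∈ F, (if i ∈ S then μ S * z i else 0)
            = (∑ S ∈ F.filter (fun S => i ∈ S), μ S) * z i := by
          conv_rhs => rw [Finset.sum_filter, Finset.sum_mul]
          exact Finset.sum_congr rfl fun S _ => by
            by_cases h : i ∈ S <;> simp [h]
        have e2 : F.filter (fun S => i ∈ S)
            = Finset.univ.filter (fun S : Finset ι => i ∈ S ∧ S ⊂ Finset.univ) := by
          ext S
          simp only [hF, Finset.mem_filter, Finset.mem_univ, true_and, and_assoc]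
          constructor
          · rintro ⟨-, h2, h3⟩; exact ⟨h3, h2⟩
          · rintro ⟨h3, h2⟩; exact ⟨⟨i, h3⟩, h2, h3⟩
        rw [e1, e2, hμb i, one_mul]
      rw [Finset.sum_congr rfl fun i _ => step3 i]
      exact hz1
    calc ∑ S ∈ F, μ S * (⨆ u : U, (⨆ b : A S, v (↑b) S u) / v a Finset.univ u)
        ≤ ∑ S ∈ F, μ S * ∑ i ∈ S, z i := step1
      _ = 1 := step2
  · -- balanced → core nonempty
    rintro ⟨a, ha, hbal⟩
    refine ⟨a, ha, ?_⟩
    set vm : Finset ι → ℝ :=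
      fun S => ⨆ u : U, (⨆ b : A S, v (↑b) S u) / v a Finset.univ u with hvm
    set P : Finset ι → Prop := fun S => S.Nonempty ∧ S ⊂ Finset.univ with hP
    -- subtype/filter conversion
    have hconv : ∀ f : Finset ι → ℝ,
        ∑ S ∈ Finset.univ.filter P, f S = ∑ S : {S // P S}, f S.1 :=
      fun f => Finset.sum_subtype _ (by simp) f
    -- set up Farkas data
    set w : Option {S // P S} → ι → ℝ := fun k i => match k with
      | none => -1
      | some S => if i ∈ S.1 then 1 else 0 with hw
    set c : Option {S // P S} → ℝ := fun k => match k with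
      | none => -1
      | some S => vm S.1 with hc
    have hfark : ∀ μ : Option {S // P S} → ℝ, (∀ k, 0 ≤ μ k) →
        (∀ i, ∑ k, μ k * w k i = 0) → ∑ k, μ k * c k ≤ 0 := by
      intro μ hμ0 hμw
      have hbalrow : ∀ i : ι,
          ∑ S : {S // P S}, (if i ∈ S.1 then μ (some S) else 0) = μ none := by
        intro i
        have := hμw i
        rw [Fintype.sum_option] at this
        simp only [hw] at this
        have e : ∑ S : {S // P S}, μ (some S) * (if i ∈ S.1 then (1:ℝ) else 0)
            = ∑ S : {S // P S}, (if i ∈ S.1 then μ (some S) else 0) :=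
          Finset.sum_congr rfl fun S _ => by by_cases h : i ∈ S.1 <;> simp [h]
        rw [e] at this
        linarith
      rw [Fintype.sum_option]
      simp only [hc]
      by_cases hlam : μ none = 0
      · -- all μ (some S) = 0
        have hall : ∀ S : {S // P S}, μ (some S) = 0 := by
          intro S
          obtain ⟨i, hi⟩ := S.2.1
          have hrow := hbalrow i
          rw [hlam] at hrow
          have := (Finset.sum_eq_zero_iff_of_nonneg (fun T _ => by
            by_cases h : i ∈ T.1 <;> simp [h, hμ0 (some T)])).mp hrow S (Finset.mem_univ S)
          simpa [hi] using this
        rw [hlam]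
        rw [Finset.sum_congr rfl fun S _ => by rw [hall S, zero_mul]]
        simp
      · have hlampos : 0 < μ none := lt_of_le_of_ne (hμ0 none) (Ne.symm hlam)
        -- apply hbal to μ' = μ(some ·)/μ none
        set μ' : Finset ι → ℝ := fun S => if h : P S then μ (some ⟨S, h⟩) / μ none else 0
          with hμ'
        have hμ'0 : ∀ S, 0 ≤ μ' S := by
          intro S
          by_cases h : P S
          · simp only [hμ']
            rw [dif_pos h]
            exact div_nonneg (hμ0 (some ⟨S, h⟩)) hlampos.le
          · simp only [hμ']
            rw [dif_neg h]
        have hμ'bal : ∀ i : ι,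
            ∑ S ∈ Finset.univ.filter (fun S : Finset ι => i ∈ S ∧ S ⊂ Finset.univ), μ' S
              = 1 := by
          intro i
          have efilt : Finset.univ.filter (fun S : Finset ι => i ∈ S ∧ S ⊂ Finset.univ)
              = (Finset.univ.filter P).filter (fun S => i ∈ S) := by
            ext S
            simp only [Finset.mem_filter, Finset.mem_univ, true_and, hP]
            constructor
            · rintro ⟨h1, h2⟩; exact ⟨⟨⟨i, h1⟩, h2⟩, h1⟩
            · rintro ⟨⟨-, h2⟩, h1⟩; exact ⟨h1, h2⟩
          rw [efilt, Finset.sum_filter, hconv (fun S => if i ∈ S then μ' S else 0)]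
          have e2 : ∑ S : {S // P S}, (if i ∈ S.1 then μ' S.1 else 0)
              = (∑ S : {S // P S}, (if i ∈ S.1 then μ (some S) else 0)) / μ none := by
            rw [Finset.sum_div]
            refine Finset.sum_congr rfl fun S _ => ?_
            by_cases h : i ∈ S.1
            · rw [if_pos h, if_pos h]
              simp only [hμ']
              rw [dif_pos S.2]
            · rw [if_neg h, if_neg h, zero_div]
          rw [e2, hbalrow i, div_self hlam]
        have hineq := hbal μ' hμ'0 hμ'bal
        rw [hconv (fun S => μ' S * vm S)] at hineq
        have e3 : ∑ S : {S // P S}, μ' S.1 * vm S.1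
            = (∑ S : {S // P S}, μ (some S) * vm S.1) / μ none := by
          rw [Finset.sum_div]
          refine Finset.sum_congr rfl fun S _ => ?_
          simp only [hμ']
          rw [dif_pos S.2, div_mul_eq_mul_div]
        rw [e3, div_le_one hlampos] at hineq
        linarith
    obtain ⟨z, hz⟩ := farkas w c hfark
    have hzn := hz none
    simp only [hw, hc] at hzn
    have hzsum : ∑ i, z i ≤ 1 := by
      have : ∑ i, (-1 : ℝ) * z i = -∑ i, z i := by
        rw [← Finset.sum_neg_distrib]
        exact Finset.sum_congr rfl fun i _ => by ring
      rw [this] at hzn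
      linarith
    obtain ⟨i₀⟩ := ‹Nonempty ι›
    set z' : ι → ℝ := fun i => z i + (if i = i₀ then 1 - ∑ j, z j else 0) with hz'
    refine ⟨z', ?_, ?_⟩
    · simp only [hz']
      rw [Finset.sum_add_distrib,
        Finset.sum_ite_eq' Finset.univ i₀ (fun _ => 1 - ∑ j, z j)]
      simp only [Finset.mem_univ, if_true]
      ring
    · intro S hSne hSss
      have hk : vm S ≤ ∑ i, (if i ∈ S then (1:ℝ) else 0) * z i :=
        hz (some ⟨S, ⟨hSne, hSss⟩⟩)
      have e4 : ∑ i, (if i ∈ S then (1:ℝ) else 0) * z i = ∑ i ∈ S, z i := by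
        have h1 : ∀ i : ι, (if i ∈ S then (1:ℝ) else 0) * z i
            = if i ∈ S then z i else 0 := fun i => by by_cases h : i ∈ S <;> simp [h]
        rw [Finset.sum_congr rfl fun i _ => h1 i, ← Finset.sum_filter]
        congr 1
        ext i
        simp
      rw [e4] at hk
      have hge : ∑ i ∈ S, z i ≤ ∑ i ∈ S, z' i := by
        refine Finset.sum_le_sum fun i _ => ?_
        simp only [hz']
        have hnn : (0:ℝ) ≤ if i = i₀ then 1 - ∑ j, z j else 0 := by
          by_cases h : i = i₀
          · simp only [h, if_true]
            linarith
          · simp [h]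
        linarith
      exact le_trans hk hge
end

section
/- For any coalition S ⊆ N, the worst-case optimal order quantity satisfies y*_wc(S) = Σ_{r=1}^R y*(S_r), where S_r = S ∩ N_r and y*(S_r) is the (p−c)/p-quantile of the known distribution of d̃(S_r); moreover the worst-case optimal profit decomposes as v_wc(S) = Σ_{r=1}^R v̄(S_r). -/
open MeasureTheory

/-- The Fréchet class of joint demand distributions on `ι → ℝ` consistent with the
prescribed block marginals `P r` on the blocks `{i // ρ i = r}`. -/
def frechet {ι : Type*} [Fintype ι] {R : ℕ} (ρ : ι → Fin R)
    (P : (r : Fin R) → Measure ({i : ι // ρ i = r} → ℝ)) : Set (Measure (ι → ℝ)) :=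
  {μ | IsProbabilityMeasure μ ∧
    ∀ r : Fin R, μ.map (fun d (i : {i : ι // ρ i = r}) => d i.1) = P r}

/-- Worst-case objective for coalition `S`:
`g(y) = (p-c)·y - p · max_{P ∈ P(P_1,...,P_R)} E_P[(y - d̃(S))⁺]`. -/
noncomputable def gwc {ι : Type*} [Fintype ι] {R : ℕ} (ρ : ι → Fin R)
    (P : (r : Fin R) → Measure ({i : ι // ρ i = r} → ℝ))
    (p c : ℝ) (S : Finset ι) (y : ℝ) : ℝ :=
  (p - c) * y - p * ⨆ μ : frechet ρ P, ∫ d, max (y - ∑ i ∈ S, d i) 0 ∂μ.1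

/-- Deterministic newsvendor objective for the block coalition `S_r = S ∩ N_r`
under the known marginal `P r`. -/
noncomputable def fdet {ι : Type*} [Fintype ι] [DecidableEq ι] {R : ℕ} (ρ : ι → Fin R)
    (P : (r : Fin R) → Measure ({i : ι // ρ i = r} → ℝ))
    (p c : ℝ) (S : Finset ι) (r : Fin R) (x : ℝ) : ℝ :=
  (p - c) * x - p * ∫ w, max (x -
    ∑ i ∈ Finset.univ.filter (fun i : {i : ι // ρ i = r} => i.1 ∈ S), w i) 0 ∂(P r)

open Set Filter ProbabilityTheory


noncomputable def qF (ν : Measure ℝ) (t : ℝ) : ℝ := (ν (Iic t)).toReal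

noncomputable def qG (ν : Measure ℝ) (M u : ℝ) : ℝ :=
  sInf {t | 0 ≤ t ∧ (u ≤ qF ν t ∨ M ≤ t)}

section Quantile

variable (ν : Measure ℝ) [IsProbabilityMeasure ν]

lemma qF_mono : Monotone (qF ν) := fun a b hab =>
  ENNReal.toReal_mono (measure_ne_top ν _) (measure_mono (Iic_subset_Iic.2 hab))

lemma qF_nonneg (t : ℝ) : 0 ≤ qF ν t := ENNReal.toReal_nonneg

lemma qF_le_one (t : ℝ) : qF ν t ≤ 1 := by
  have h : ν (Iic t) ≤ 1 := prob_le_one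
  have := ENNReal.toReal_mono (by simp) h
  simpa [qF] using this

lemma qF_eq_measure (t : ℝ) : ν (Iic t) = ENNReal.ofReal (qF ν t) := by
  rw [qF, ENNReal.ofReal_toReal (measure_ne_top ν _)]

lemma qF_rc (a : ℝ) :
    Tendsto (fun n : ℕ => qF ν (a + 1/(n+1))) atTop (nhds (qF ν a)) := by
  have hinter : ⋂ n : ℕ, Iic (a + 1/(n+1)) = Iic a := by
    ext x
    simp only [mem_iInter, mem_Iic]
    constructor
    · intro h
      by_contra hx
      push_neg at hx
      obtain ⟨n, hn⟩ := exists_nat_one_div_lt (sub_pos.2 hx)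
      have := h n
      linarith
    · intro h n
      have : (0:ℝ) < 1/(n+1) := by positivity
      linarith
  have hanti : Antitone (fun n : ℕ => Iic (a + 1/(n+1) : ℝ)) := by
    intro n m hnm
    apply Iic_subset_Iic.2
    have h1 : (1:ℝ)/(m+1) ≤ 1/(n+1) := by
      apply one_div_le_one_div_of_le (by positivity)
      exact_mod_cast (by exact_mod_cast Nat.succ_le_succ hnm : (n:ℕ)+1 ≤ m+1)
    linarith
  have h1 := MeasureTheory.tendsto_measure_iInter_atTop
    (fun n => (measurableSet_Iic).nullMeasurableSet) hanti ⟨0, measure_ne_top ν _⟩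
  rw [hinter] at h1
  exact (ENNReal.tendsto_toReal (measure_ne_top ν _)).comp h1

/-- limit argument: if `u ≤ qF (a + ε)` for all small ε then `u ≤ qF a`. -/
lemma qF_le_of_forall (a u : ℝ) (h : ∀ n : ℕ, u ≤ qF ν (a + 1/(n+1))) : u ≤ qF ν a :=
  ge_of_tendsto (qF_rc ν a) (Filter.Eventually.of_forall h)

variable (M : ℝ) (hM0 : 0 ≤ M) (hM : ν (Iic M) = 1) (h0 : ν (Iio 0) = 0)

include h0 in
lemma qF_lt_zero {t : ℝ} (ht : t < 0) : qF ν t = 0 := by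
  have : ν (Iic t) = 0 :=
    measure_mono_null (Iic_subset_Iio.2 ht) h0
  simp [qF, this]

include hM in
lemma qF_of_M_le {t : ℝ} (ht : M ≤ t) : qF ν t = 1 := by
  have h1 : (1:ENNReal) ≤ ν (Iic t) := hM ▸ measure_mono (Iic_subset_Iic.2 ht)
  have h2 : ν (Iic t) ≤ 1 := prob_le_one
  simp [qF, le_antisymm h2 h1]

include hM0 in
lemma qG_set_nonempty (u : ℝ) : {t | 0 ≤ t ∧ (u ≤ qF ν t ∨ M ≤ t)}.Nonempty :=
  ⟨M, hM0, Or.inr le_rfl⟩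

lemma qG_set_bddBelow (u : ℝ) : BddBelow {t | 0 ≤ t ∧ (u ≤ qF ν t ∨ M ≤ t)} :=
  ⟨0, fun t ht => ht.1⟩

include hM0 in
lemma qG_nonneg (u : ℝ) : 0 ≤ qG ν M u :=
  le_csInf (qG_set_nonempty ν M hM0 u) (fun t ht => ht.1)

include hM0 in
lemma qG_mono : Monotone (qG ν M) := by
  intro u v huv
  refine csInf_le_csInf (qG_set_bddBelow ν M u) (qG_set_nonempty ν M hM0 v) ?_
  intro t ht
  exact ⟨ht.1, ht.2.imp (fun h => le_trans huv h) id⟩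

include hM0 in
lemma qG_measurable : Measurable (qG ν M) := (qG_mono ν M hM0).measurable

include hM0 hM h0 in
lemma qG_le_iff {u a : ℝ} (hu : 0 < u) (hu1 : u ≤ 1) :
    qG ν M u ≤ a ↔ u ≤ qF ν a := by
  constructor
  · intro h
    apply qF_le_of_forall ν a u
    intro n
    have hpos : (0:ℝ) < 1/(n+1) := by positivity
    have hlt : qG ν M u < a + 1/(n+1) := lt_of_le_of_lt h (by linarith)
    obtain ⟨t, ht, htlt⟩ := exists_lt_of_csInf_lt (qG_set_nonempty ν M hM0 u) hlt
    have hqt : u ≤ qF ν t := by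
      rcases ht.2 with h1 | h1
      · exact h1
      · rw [qF_of_M_le ν M hM h1]; exact hu1
    exact le_trans hqt (qF_mono ν (le_of_lt htlt))
  · intro h
    have ha0 : 0 ≤ a := by
      by_contra hneg
      push_neg at hneg
      rw [qF_lt_zero ν h0 hneg] at h
      linarith
    exact csInf_le (qG_set_bddBelow ν M u) ⟨ha0, Or.inl h⟩

include hM0 hM h0 in
lemma lt_qG_iff {u a : ℝ} (hu : 0 < u) (hu1 : u ≤ 1) :
    a < qG ν M u ↔ qF ν a < u := by
  rw [← not_le, ← not_le, qG_le_iff ν M hM0 hM h0 hu hu1]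

include hM0 hM h0 in
/-- The quantile function pushes the uniform distribution on `(0,1)` forward to `ν`. -/
lemma map_qG : (volume.restrict (Ioo (0:ℝ) 1)).map (qG ν M) = ν := by
  have hmeas := qG_measurable ν M hM0
  have hfin : IsFiniteMeasure ((volume.restrict (Ioo (0:ℝ) 1)).map (qG ν M)) := by
    constructor
    rw [Measure.map_apply hmeas MeasurableSet.univ]
    simp [Real.volume_Ioo]
  apply MeasureTheory.Measure.ext_of_Iic
  intro a
  rw [Measure.map_apply hmeas measurableSet_Iic,
    Measure.restrict_apply (hmeas measurableSet_Iic)]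
  have hset : qG ν M ⁻¹' Iic a ∩ Ioo 0 1 = Iic (qF ν a) ∩ Ioo 0 1 := by
    ext u
    simp only [mem_inter_iff, mem_preimage, mem_Iic, mem_Ioo, and_congr_left_iff]
    intro hu
    rw [qG_le_iff ν M hM0 hM h0 hu.1 (le_of_lt hu.2)]
  rw [hset]
  rw [qF_eq_measure]
  rcases lt_or_ge (qF ν a) 1 with hlt | hge
  · have : Iic (qF ν a) ∩ Ioo 0 1 = Ioc 0 (qF ν a) := by
      ext u
      simp only [mem_inter_iff, mem_Iic, mem_Ioo, mem_Ioc]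
      constructor
      · rintro ⟨h1, h2, h3⟩; exact ⟨h2, h1⟩
      · rintro ⟨h1, h2⟩; exact ⟨h2, h1, lt_of_le_of_lt h2 hlt⟩
    rw [this, Real.volume_Ioc]
    congr 1
    ring
  · have h1 : qF ν a = 1 := le_antisymm (qF_le_one ν a) hge
    have : Iic (qF ν a) ∩ Ioo 0 1 = Ioo 0 1 := by
      rw [inter_eq_right]
      intro u hu
      simp only [mem_Iic]
      rw [h1]
      exact le_of_lt hu.2
    rw [this, Real.volume_Ioo, h1]
    norm_num

include hM0 hM in
lemma le_qG {u a : ℝ} (hu1 : u ≤ 1) (ha : (ν (Iio a)).toReal < u) : a ≤ qG ν M u := by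
  refine le_csInf (qG_set_nonempty ν M hM0 u) ?_
  intro t ht
  by_contra hlt
  push_neg at hlt
  have h1 : qF ν t ≤ (ν (Iio a)).toReal :=
    ENNReal.toReal_mono (measure_ne_top _ _) (measure_mono (Iic_subset_Iio.2 hlt))
  rcases ht.2 with h2 | h2
  · linarith
  · rw [qF_of_M_le ν M hM h2] at h1; linarith

end Quantile

section NV
variable (ν : Measure ℝ) [IsProbabilityMeasure ν] (h0 : ν (Iio 0) = 0)

include h0 in
lemma nv_ae_nonneg : ∀ᵐ t ∂ν, 0 ≤ t := by
  rw [ae_iff]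
  convert h0 using 2
  ext t; simp

include h0 in
lemma nv_integrable (x : ℝ) : Integrable (fun t => max (x - t) 0) ν := by
  refine Integrable.mono (integrable_const (max x 0)) ?_ ?_
  · exact ((continuous_const.sub continuous_id).max continuous_const).aestronglyMeasurable
  · filter_upwards [nv_ae_nonneg ν h0] with t ht
    rw [Real.norm_eq_abs, Real.norm_eq_abs, abs_of_nonneg (le_max_right _ _),
      abs_of_nonneg (le_max_right _ _)]
    exact max_le_max (by linarith) le_rfl

variable {p c y : ℝ}

include h0 in
lemma nv_qF_ge (hc : 0 < c) (hcp : c < p) (hy : 0 ≤ y)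
    (hopt : ∀ x : ℝ, 0 ≤ x →
      (p - c) * x - p * ∫ t, max (x - t) 0 ∂ν ≤ (p - c) * y - p * ∫ t, max (y - t) 0 ∂ν) :
    (p - c) / p ≤ qF ν y := by
  have hp : (0:ℝ) < p := lt_trans hc hcp
  have key : ∀ x : ℝ, y < x → (p - c) / p ≤ qF ν x := by
    intro x hx
    have hx0 : 0 ≤ x := le_trans hy (le_of_lt hx)
    have h1 := hopt x hx0
    have h2 : ∫ t, (max (x - t) 0 - max (y - t) 0) ∂ν
        ≤ ∫ t, (Iic x).indicator (fun _ => x - y) t ∂ν := by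
      refine integral_mono ((nv_integrable ν h0 x).sub (nv_integrable ν h0 y)) ?_ ?_
      · exact (integrable_const (x - y)).indicator measurableSet_Iic
      · intro t
        simp only [indicator]
        split_ifs with ht
        · simp only [mem_Iic] at ht
          have : x - t = (y - t) + (x - y) := by ring
          have h3 : max (x - t) 0 ≤ max (y - t) 0 + (x - y) := by
            rw [this]
            refine max_le (by linarith [le_max_left (y - t) 0]) ?_
            have := le_max_right (y - t) 0
            linarith
          linarith
        · simp only [mem_Iic, not_le] at ht
          have : max (x - t) 0 = 0 := max_eq_right (by linarith)
          have h4 := le_max_right (y - t) 0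
          simp only [this]
          linarith
    rw [integral_sub (nv_integrable ν h0 x) (nv_integrable ν h0 y),
      integral_indicator_const _ measurableSet_Iic] at h2
    have h5 : ν.real (Iic x) = qF ν x := rfl
    rw [h5, smul_eq_mul] at h2
    have h6 : (p - c) * (x - y) ≤ p * (qF ν x * (x - y)) := by nlinarith
    rw [div_le_iff₀ hp]
    have hxy : 0 < x - y := by linarith
    nlinarith
  apply qF_le_of_forall ν y
  intro n
  refine key _ ?_
  have : (0:ℝ) < 1/(n+1) := by positivity
  linarith

include h0 in
lemma nv_qF_lt (hc : 0 < c) (hcp : c < p) (hy : 0 ≤ y)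
    (hopt : ∀ x : ℝ, 0 ≤ x →
      (p - c) * x - p * ∫ t, max (x - t) 0 ∂ν ≤ (p - c) * y - p * ∫ t, max (y - t) 0 ∂ν) :
    (ν (Iio y)).toReal ≤ (p - c) / p := by
  have hp : (0:ℝ) < p := lt_trans hc hcp
  have hq0 : 0 ≤ (p - c) / p := div_nonneg (by linarith) (le_of_lt hp)
  rcases eq_or_lt_of_le hy with hy0 | hy0
  · rw [← hy0, h0]
    simpa using hq0
  -- y > 0
  have key : ∀ x : ℝ, 0 ≤ x → x < y → qF ν x ≤ (p - c) / p := by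
    intro x hx0 hxy
    have h1 := hopt x hx0
    have h2 : ∫ t, (Iic x).indicator (fun _ => y - x) t ∂ν
        ≤ ∫ t, (max (y - t) 0 - max (x - t) 0) ∂ν := by
      refine integral_mono ((integrable_const (y - x)).indicator measurableSet_Iic)
        ((nv_integrable ν h0 y).sub (nv_integrable ν h0 x)) ?_
      intro t
      simp only [indicator]
      split_ifs with ht
      · simp only [mem_Iic] at ht
        rw [max_eq_left (by linarith : (0:ℝ) ≤ y - t), max_eq_left (by linarith : (0:ℝ) ≤ x - t)]
        ring_nf
        exact le_rfl
      · simp only [mem_Iic, not_le] at ht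
        rw [max_eq_right (by linarith : x - t ≤ 0)]
        have := le_max_right (y - t) 0
        linarith
    rw [integral_sub (nv_integrable ν h0 y) (nv_integrable ν h0 x),
      integral_indicator_const _ measurableSet_Iic, smul_eq_mul] at h2
    have h5 : ν.real (Iic x) = qF ν x := rfl
    rw [h5] at h2
    have hxy' : 0 < y - x := by linarith
    rw [le_div_iff₀ hp]
    nlinarith
  -- limit x ↑ y
  have hxn : ∀ n : ℕ, (0:ℝ) ≤ y - y/(n+1) ∧ y - y/(n+1) < y := by
    intro n
    constructor
    · have h1 : y/(n+1) ≤ y := by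
        rw [div_le_iff₀ (by positivity)]
        nlinarith [Nat.cast_nonneg (α := ℝ) n]
      linarith
    · have : (0:ℝ) < y/(n+1) := by positivity
      linarith
  have hmono : Monotone (fun n : ℕ => Iic (y - y/(n+1))) := by
    intro n m hnm
    apply Iic_subset_Iic.2
    have h1 : (y:ℝ)/(m+1) ≤ y/(n+1) := by
      apply div_le_div_of_nonneg_left (le_of_lt hy0) (by positivity)
      exact_mod_cast Nat.succ_le_succ hnm
    linarith
  have hunion : (⋃ n : ℕ, Iic (y - y/(n+1))) = Iio y := by
    ext t
    simp only [mem_iUnion, mem_Iic, mem_Iio]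
    constructor
    · rintro ⟨n, hn⟩
      have := (hxn n).2
      linarith
    · intro ht
      obtain ⟨n, hn⟩ := exists_nat_one_div_lt (show (0:ℝ) < (y - t)/y from div_pos (by linarith) hy0)
      refine ⟨n, ?_⟩
      have h2 : y * (1/(n+1)) < y * ((y-t)/y) := by
        apply mul_lt_mul_of_pos_left hn hy0
      rw [mul_div_cancel₀ _ (ne_of_gt hy0)] at h2
      have : y / (n+1) = y * (1/(n+1)) := by ring
      linarith [this ▸ h2]
  have htend := MeasureTheory.tendsto_measure_iUnion_atTop (μ := ν) hmono
  rw [hunion] at htend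
  have htendR := (ENNReal.tendsto_toReal (measure_ne_top ν _)).comp htend
  refine le_of_tendsto htendR (Eventually.of_forall ?_)
  intro n
  exact key _ (hxn n).1 (hxn n).2

end NV

lemma measurable_measure_pi {R : Type*} [Fintype R] {B : R → Type*}
    [∀ r, MeasurableSpace (B r)]
    (f : (r : R) → ℝ → Measure (B r)) (hf : ∀ r, Measurable (f r))
    (hprob : ∀ r u, IsProbabilityMeasure (f r u)) :
    Measurable (fun u => Measure.pi (fun r => f r u)) := by
  haveI : ∀ u r, IsProbabilityMeasure (f r u) := fun u r => hprob r u
  rw [Measure.measurable_measure]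
  intro s hs
  refine MeasurableSpace.induction_on_inter (C := fun s _ => Measurable fun u => Measure.pi (fun r => f r u) s)
    generateFrom_pi.symm isPiSystem_pi ?_ ?_ ?_ ?_ s hs
  · simp only [measure_empty]; exact measurable_const
  · intro t ht
    obtain ⟨t, ht, rfl⟩ := ht
    have : (fun u => Measure.pi (fun r => f r u) (univ.pi t))
        = fun u => ∏ r, f r u (t r) := by
      funext u
      exact Measure.pi_pi _ _
    rw [this]
    exact Finset.measurable_prod _ (fun r _ =>
      (Measure.measurable_coe (ht r (mem_univ r))).comp (hf r))
  · intro t htm hC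
    have : (fun u => Measure.pi (fun r => f r u) tᶜ)
        = fun u => 1 - Measure.pi (fun r => f r u) t := by
      funext u
      exact prob_compl_eq_one_sub htm
    rw [this]
    exact measurable_const.sub hC
  · intro g hdisj hgm hC
    have : (fun u => Measure.pi (fun r => f r u) (⋃ n, g n))
        = fun u => ∑' n, Measure.pi (fun r => f r u) (g n) := by
      funext u
      exact measure_iUnion hdisj hgm
    rw [this]
    exact Measurable.ennreal_tsum hC

lemma sum_blocks {ι : Type*} [Fintype ι] [DecidableEq ι] {R : ℕ} (ρ : ι → Fin R)
    (S : Finset ι) (d : ι → ℝ) :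
    ∑ i ∈ S, d i
      = ∑ r : Fin R, ∑ i ∈ Finset.univ.filter (fun i : {i : ι // ρ i = r} => i.1 ∈ S), d i.1 := by
  rw [← Finset.sum_fiberwise S ρ d]
  refine Finset.sum_congr rfl (fun r _ => ?_)
  refine Finset.sum_bij (fun (i : ι) (hi : i ∈ Finset.filter (fun i => ρ i = r) S) =>
    (⟨i, (Finset.mem_filter.1 hi).2⟩ : {i : ι // ρ i = r})) ?_ ?_ ?_ ?_
  · intro a ha
    simp only [Finset.mem_filter, Finset.mem_univ, true_and]
    exact (Finset.mem_filter.1 ha).1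
  · intro a ha b hb hab
    simpa using congrArg Subtype.val hab
  · intro b hb
    refine ⟨b.1, Finset.mem_filter.2 ⟨by simpa using hb, b.2⟩, ?_⟩
    simp
  · intro a ha; rfl

lemma integrable_pos_part {α : Type*} [MeasurableSpace α] (μ : Measure α)
    [IsProbabilityMeasure μ] {Z : α → ℝ} (hZ : AEStronglyMeasurable Z μ)
    (hZ0 : ∀ᵐ a ∂μ, 0 ≤ Z a) (x : ℝ) :
    Integrable (fun a => max (x - Z a) 0) μ := by
  refine Integrable.mono (integrable_const (max x 0))
    ((aestronglyMeasurable_const.sub hZ).sup aestronglyMeasurable_const) ?_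
  filter_upwards [hZ0] with a ha
  rw [Real.norm_eq_abs, Real.norm_eq_abs, abs_of_nonneg (le_max_right _ _),
    abs_of_nonneg (le_max_right _ _)]
  exact max_le_max (by linarith) le_rfl

lemma integral_pos_part_le {α : Type*} [MeasurableSpace α] (μ : Measure α)
    [IsProbabilityMeasure μ] {Z : α → ℝ} (hZ0 : ∀ᵐ a ∂μ, 0 ≤ Z a) (x : ℝ) :
    ∫ a, max (x - Z a) 0 ∂μ ≤ max x 0 := by
  have h1 : ∫ a, max (x - Z a) 0 ∂μ ≤ ∫ _, max x 0 ∂μ := by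
    refine integral_mono_of_nonneg (Eventually.of_forall (fun a => le_max_right _ _))
      (integrable_const _) ?_
    filter_upwards [hZ0] with a ha
    exact max_le_max (by linarith) le_rfl
  simpa using h1

/-- The worst-case optimal ordering quantity decomposes as
`y*_wc(S) = ∑_r y*(S_r)` (a sum of block quantiles/maximizers), and the worst-case optimal
profit decomposes as `v_wc(S) = ∑_r v̄(S_r)`. -/
theorem stmt_9 {ι : Type*} [Fintype ι] [DecidableEq ι] {R : ℕ} (ρ : ι → Fin R)
    (P : (r : Fin R) → Measure ({i : ι // ρ i = r} → ℝ))
    (hP : ∀ r, IsProbabilityMeasure (P r))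
    (hnonneg : ∀ r, ∀ᵐ w ∂(P r), ∀ i, 0 ≤ w i)
    (hbdd : ∀ r, ∃ M : ℝ, ∀ᵐ w ∂(P r), ∀ i, w i ≤ M)
    (p c : ℝ) (hc : 0 < c) (hcp : c < p)
    (S : Finset ι) (yq : Fin R → ℝ)
    (hyq : ∀ r : Fin R, 0 ≤ yq r ∧
      ∀ x : ℝ, 0 ≤ x → fdet ρ P p c S r x ≤ fdet ρ P p c S r (yq r)) :
    gwc ρ P p c S (∑ r, yq r) = (⨆ y : {y : ℝ // 0 ≤ y}, gwc ρ P p c S y.1) ∧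
    (⨆ y : {y : ℝ // 0 ≤ y}, gwc ρ P p c S y.1) = ∑ r, fdet ρ P p c S r (yq r) := by
  classical
  haveI := hP
  have hp : (0:ℝ) < p := lt_trans hc hcp
  set q : ℝ := (p - c) / p with hqdef
  have hq0 : 0 < q := div_pos (by linarith) hp
  have hq1 : q < 1 := (div_lt_one hp).2 (by linarith)
  haveI : IsProbabilityMeasure (volume.restrict (Ioo (0:ℝ) 1)) :=
    ⟨by rw [Measure.restrict_apply_univ]; simp⟩
  -- block sum functional
  set T : (r : Fin R) → ({i : ι // ρ i = r} → ℝ) → ℝ :=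
    fun r w => ∑ i ∈ Finset.univ.filter (fun i : {i : ι // ρ i = r} => i.1 ∈ S), w i with hTdef
  have hTmeas : ∀ r, Measurable (T r) := fun r =>
    Finset.measurable_sum _ (fun i _ => measurable_pi_apply i)
  have hTnonneg : ∀ r, ∀ᵐ w ∂(P r), 0 ≤ T r w := by
    intro r
    filter_upwards [hnonneg r] with w hw
    exact Finset.sum_nonneg (fun i _ => hw i)
  have hrestrmeas : ∀ r : Fin R, Measurable (fun (d : ι → ℝ) (i : {i : ι // ρ i = r}) => d i.1) :=
    fun r => measurable_pi_lambda _ (fun i => measurable_pi_apply i.1)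
  -- laws of the block sums
  set L : Fin R → Measure ℝ := fun r => (P r).map (T r) with hLdef
  haveI hLprob : ∀ r, IsProbabilityMeasure (L r) :=
    fun r => Measure.isProbabilityMeasure_map (hTmeas r).aemeasurable
  have hL0 : ∀ r, L r (Iio 0) = 0 := by
    intro r
    rw [hLdef]
    rw [Measure.map_apply (hTmeas r) measurableSet_Iio]
    have h1 : T r ⁻¹' Iio 0 = {w | ¬ 0 ≤ T r w} := by
      ext w; simp [not_le]
    rw [h1]
    exact ae_iff.1 (hTnonneg r)
  have hLbdd : ∀ r, ∃ M : ℝ, 0 ≤ M ∧ L r (Iic M) = 1 := by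
    intro r
    obtain ⟨M0, hM0⟩ := hbdd r
    refine ⟨((Finset.univ.filter (fun i : {i : ι // ρ i = r} => i.1 ∈ S)).card : ℝ) * max M0 0,
      by positivity, ?_⟩
    rw [hLdef, Measure.map_apply (hTmeas r) measurableSet_Iic]
    have hae : ∀ᵐ w ∂(P r), w ∈ T r ⁻¹' Iic
        (((Finset.univ.filter (fun i : {i : ι // ρ i = r} => i.1 ∈ S)).card : ℝ) * max M0 0) := by
      filter_upwards [hM0] with w hw
      simp only [mem_preimage, mem_Iic]
      calc T r w
          ≤ ∑ _i ∈ Finset.univ.filter (fun i : {i : ι // ρ i = r} => i.1 ∈ S), max M0 0 :=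
            Finset.sum_le_sum (fun i _ => le_trans (hw i) (le_max_left _ _))
        _ = _ := by rw [Finset.sum_const, nsmul_eq_mul]
    have h9 : P r (T r ⁻¹' Iic
        (((Finset.univ.filter (fun i : {i : ι // ρ i = r} => i.1 ∈ S)).card : ℝ) * max M0 0))
        = P r univ := measure_congr (Filter.eventuallyEq_univ.2 hae)
    rw [h9]
    exact measure_univ
  choose Mr hMr0 hMr using hLbdd
  -- quantile functions
  set G : Fin R → ℝ → ℝ := fun r => qG (L r) (Mr r) with hGdef
  have hGmeas : ∀ r, Measurable (G r) := fun r => qG_measurable _ _ (hMr0 r)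
  have hG0 : ∀ r u, 0 ≤ G r u := fun r u => qG_nonneg _ _ (hMr0 r) u
  have hmapG : ∀ r, (volume.restrict (Ioo (0:ℝ) 1)).map (G r) = L r :=
    fun r => map_qG _ _ (hMr0 r) (hMr r) (hL0 r)
  -- `fdet` in terms of `L r`
  have hmaxmeas : ∀ x : ℝ, Measurable (fun t : ℝ => max (x - t) 0) :=
    fun x => (measurable_const.sub measurable_id).max measurable_const
  have hfd0 : ∀ r x, fdet ρ P p c S r x
      = (p - c) * x - p * ∫ w, max (x - T r w) 0 ∂(P r) := fun r x => rfl
  have hfdet : ∀ r x, fdet ρ P p c S r x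
      = (p - c) * x - p * ∫ t, max (x - t) 0 ∂(L r) := by
    intro r x
    rw [hfd0 r x, hLdef]
    congr 2
    rw [integral_map (hTmeas r).aemeasurable (hmaxmeas x).aestronglyMeasurable]
  -- quantile bounds from optimality
  have hyq0 : ∀ r, 0 ≤ yq r := fun r => (hyq r).1
  have hqF_ge : ∀ r, q ≤ qF (L r) (yq r) := by
    intro r
    refine nv_qF_ge (L r) (hL0 r) hc hcp (hyq0 r) ?_
    intro x hx
    have h1 := (hyq r).2 x hx
    rw [hfdet r x, hfdet r (yq r)] at h1
    exact h1
  have hqF_lt : ∀ r, (L r (Iio (yq r))).toReal ≤ q := by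
    intro r
    refine nv_qF_lt (L r) (hL0 r) hc hcp (hyq0 r) ?_
    intro x hx
    have h1 := (hyq r).2 x hx
    rw [hfdet r x, hfdet r (yq r)] at h1
    exact h1
  have hGle : ∀ (r : Fin R) (u : ℝ), 0 < u → u ≤ q → G r u ≤ yq r := fun r u hu huq =>
    (qG_le_iff (L r) (Mr r) (hMr0 r) (hMr r) (hL0 r) hu
      (le_trans huq (le_of_lt hq1))).2 (le_trans huq (hqF_ge r))
  have hGge : ∀ (r : Fin R) (u : ℝ), q < u → u ≤ 1 → yq r ≤ G r u := fun r u hqu hu1 =>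
    le_qG (L r) (Mr r) (hMr0 r) (hMr r) hu1 (lt_of_le_of_lt (hqF_lt r) hqu)
  -- the conditional kernels
  set ν' : (r : Fin R) → Measure (ℝ × ({i : ι // ρ i = r} → ℝ)) :=
    fun r => (P r).map (fun w => (T r w, w)) with hν'def
  have hpairmeas : ∀ r, Measurable (fun w : {i : ι // ρ i = r} → ℝ => (T r w, w)) :=
    fun r => (hTmeas r).prodMk measurable_id
  haveI hν'prob : ∀ r, IsProbabilityMeasure (ν' r) :=
    fun r => Measure.isProbabilityMeasure_map (hpairmeas r).aemeasurable
  have hfst : ∀ r, (ν' r).fst = L r := by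
    intro r
    rw [hν'def, hLdef]
    unfold Measure.fst
    rw [Measure.map_map measurable_fst (hpairmeas r)]
    rfl
  set κ : (r : Fin R) → Kernel ℝ ({i : ι // ρ i = r} → ℝ) :=
    fun r => (ν' r).condKernel with hκdef
  haveI hκmarkov : ∀ r, IsMarkovKernel (κ r) := fun r => by
    rw [hκdef]; infer_instance
  have hdis : ∀ r, (L r) ⊗ₘ (κ r) = ν' r := by
    intro r
    rw [← hfst r, hκdef]
    exact (ν' r).disintegrate _
  have hbindP : ∀ r, (L r).bind (κ r) = P r := by
    intro r
    ext s hs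
    rw [Measure.bind_apply hs (κ r).measurable.aemeasurable]
    have h1 : P r s = ν' r (Prod.snd ⁻¹' s) := by
      rw [hν'def, Measure.map_apply (hpairmeas r) (measurable_snd hs)]
      rfl
    rw [h1, ← hdis r, Measure.compProd_apply (measurable_snd hs)]
    rfl
  have hBadmeas : ∀ r, MeasurableSet {x : ℝ × ({i : ι // ρ i = r} → ℝ) | T r x.2 ≠ x.1} :=
    fun r => (measurableSet_eq_fun ((hTmeas r).comp measurable_snd) measurable_fst).compl
  have hfiber : ∀ r, ∀ᵐ t ∂(L r), (κ r) t {w | T r w ≠ t} = 0 := by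
    intro r
    have h1 : ν' r {x : ℝ × ({i : ι // ρ i = r} → ℝ) | T r x.2 ≠ x.1} = 0 := by
      rw [hν'def, Measure.map_apply (hpairmeas r) (hBadmeas r)]
      have : (fun w : {i : ι // ρ i = r} → ℝ => (T r w, w)) ⁻¹'
          {x : ℝ × ({i : ι // ρ i = r} → ℝ) | T r x.2 ≠ x.1} = ∅ := by
        ext w; simp
      rw [this, measure_empty]
    rw [← hdis r, Measure.compProd_apply (hBadmeas r)] at h1
    have h2 := (lintegral_eq_zero_iff
      (Kernel.measurable_kernel_prodMk_left (hBadmeas r))).1 h1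
    filter_upwards [h2] with t ht
    have h3 : Prod.mk t ⁻¹' {x : ℝ × ({i : ι // ρ i = r} → ℝ) | T r x.2 ≠ x.1}
        = {w | T r w ≠ t} := by
      ext w; simp
    rw [← h3]
    simpa using ht
  -- the product coupling
  set Ppi : ℝ → Measure (∀ r : Fin R, {i : ι // ρ i = r} → ℝ) :=
    fun u => Measure.pi (fun r => κ r (G r u)) with hPpidef
  have hPpimeas : Measurable Ppi := by
    rw [hPpidef]
    exact measurable_measure_pi _ (fun r => (κ r).measurable.comp (hGmeas r))
      (fun r u => inferInstance)
  haveI hPpiprob : ∀ u, IsProbabilityMeasure (Ppi u) := fun u => by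
    rw [hPpidef]; infer_instance
  set μ0 : Measure (∀ r : Fin R, {i : ι // ρ i = r} → ℝ) :=
    (volume.restrict (Ioo (0:ℝ) 1)).bind Ppi with hμ0def
  haveI hμ0prob : IsProbabilityMeasure μ0 := by
    constructor
    rw [hμ0def, Measure.bind_apply MeasurableSet.univ hPpimeas.aemeasurable]
    simp only [measure_univ, lintegral_one]
  set combine : (∀ r : Fin R, {i : ι // ρ i = r} → ℝ) → (ι → ℝ) :=
    fun w i => w (ρ i) ⟨i, rfl⟩ with hcombdef
  have hcombmeas : Measurable combine :=
    measurable_pi_lambda _ (fun i => (measurable_pi_apply _).comp (measurable_pi_apply (ρ i)))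
  set μstar : Measure (ι → ℝ) := μ0.map combine with hμstardef
  haveI hμstarprob : IsProbabilityMeasure μstar :=
    Measure.isProbabilityMeasure_map hcombmeas.aemeasurable
  have hrestrcomb : ∀ (r : Fin R) w, (fun (i : {i : ι // ρ i = r}) => combine w i.1) = w r := by
    intro r w
    funext i
    obtain ⟨i, hi⟩ := i
    subst hi
    rfl
  -- marginals of the coupling
  have hmargin : ∀ r, μstar.map (fun d (i : {i : ι // ρ i = r}) => d i.1) = P r := by
    intro r
    rw [hμstardef, Measure.map_map (hrestrmeas r) hcombmeas]
    have hcomp : ((fun d (i : {i : ι // ρ i = r}) => d i.1) ∘ combine) = fun w => w r := by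
      funext w
      exact hrestrcomb r w
    rw [hcomp]
    ext s hs
    rw [Measure.map_apply (measurable_pi_apply r) hs, hμ0def,
      Measure.bind_apply (measurable_pi_apply r hs) hPpimeas.aemeasurable]
    have hev : ∀ u, Ppi u ((fun w : ∀ j : Fin R, {i : ι // ρ i = j} → ℝ => w r) ⁻¹' s)
        = (κ r) (G r u) s := by
      intro u
      have h1 : ((fun w : ∀ j : Fin R, {i : ι // ρ i = j} → ℝ => w r) ⁻¹' s)
          = univ.pi (Function.update (fun j : Fin R =>
              (univ : Set ({i : ι // ρ i = j} → ℝ))) r s) := Set.eval_preimage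
      rw [hPpidef, h1, Measure.pi_pi]
      rw [Finset.prod_eq_single r]
      · rw [Function.update_self]
      · intro j _ hj
        rw [Function.update_of_ne hj]
        exact measure_univ
      · intro h
        exact absurd (Finset.mem_univ r) h
    simp_rw [hev]
    rw [← lintegral_map ((κ r).measurable_coe hs) (hGmeas r), hmapG r, ← hbindP r,
      Measure.bind_apply hs (κ r).measurable.aemeasurable]
  have hmem : μstar ∈ frechet ρ P := ⟨hμstarprob, hmargin⟩
  -- a.e. fiber property along the quantile coupling
  have hgoodae : ∀ᵐ u ∂(volume.restrict (Ioo (0:ℝ) 1)),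
      ∀ r, (κ r) (G r u) {w | T r w ≠ G r u} = 0 := by
    rw [ae_all_iff]
    intro r
    have h3 : (fun t => (κ r) t {w | T r w ≠ t})
        = fun t => (κ r) t (Prod.mk t ⁻¹' {x : ℝ × ({i : ι // ρ i = r} → ℝ) | T r x.2 ≠ x.1}) := by
      funext t
      have h3' : {w : {i : ι // ρ i = r} → ℝ | T r w ≠ t}
          = Prod.mk t ⁻¹' {x : ℝ × ({i : ι // ρ i = r} → ℝ) | T r x.2 ≠ x.1} := by
        ext w; simp
      rw [h3']
    have hpm : MeasurableSet {t : ℝ | (κ r) t {w | T r w ≠ t} = 0} := by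
      have h2 : Measurable (fun t => (κ r) t {w | T r w ≠ t}) := by
        rw [h3]
        exact Kernel.measurable_kernel_prodMk_left (hBadmeas r)
      exact h2 (measurableSet_singleton 0)
    have h4 : ∀ᵐ t ∂((volume.restrict (Ioo (0:ℝ) 1)).map (G r)),
        (κ r) t {w | T r w ≠ t} = 0 := by
      rw [hmapG r]
      exact hfiber r
    exact (ae_map_iff (hGmeas r).aemeasurable hpm).1 h4
  -- sum functionals
  have hDmeas : Measurable (fun d : ι → ℝ => ∑ i ∈ S, d i) :=
    Finset.measurable_sum _ (fun i _ => measurable_pi_apply i)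
  set H : ℝ → ℝ := fun u => ∑ r, G r u with hHdef
  have hHmeas : Measurable H := Finset.measurable_sum _ (fun r _ => hGmeas r)
  have hH0 : ∀ u, 0 ≤ H u := fun u => Finset.sum_nonneg (fun r _ => hG0 r u)
  -- distribution of the coalition demand under the coupling
  have hDdist : μstar.map (fun d => ∑ i ∈ S, d i)
      = (volume.restrict (Ioo (0:ℝ) 1)).map H := by
    rw [hμstardef, Measure.map_map hDmeas hcombmeas]
    have hcomp : ((fun d : ι → ℝ => ∑ i ∈ S, d i) ∘ combine)
        = fun w : ∀ r : Fin R, {i : ι // ρ i = r} → ℝ => ∑ r, T r (w r) := by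
      funext w
      simp only [Function.comp_apply]
      rw [sum_blocks ρ S (combine w)]
      refine Finset.sum_congr rfl (fun r _ => ?_)
      rw [← hrestrcomb r w]
    rw [hcomp]
    have hgmeas : Measurable (fun w : ∀ r : Fin R, {i : ι // ρ i = r} → ℝ => ∑ r, T r (w r)) :=
      Finset.measurable_sum _ (fun r _ => (hTmeas r).comp (measurable_pi_apply r))
    ext s hs
    rw [Measure.map_apply hgmeas hs, Measure.map_apply hHmeas hs, hμ0def,
      Measure.bind_apply (hgmeas hs) hPpimeas.aemeasurable]
    have hkey : ∀ᵐ u ∂(volume.restrict (Ioo (0:ℝ) 1)),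
        Ppi u ((fun w : ∀ r : Fin R, {i : ι // ρ i = r} → ℝ => ∑ r, T r (w r)) ⁻¹' s)
          = (H ⁻¹' s).indicator (fun _ => (1:ENNReal)) u := by
      filter_upwards [hgoodae] with u hu
      have hgood2 : ∀ᵐ w ∂(Ppi u), ∑ r, T r (w r) = H u := by
        have hnull : Ppi u (⋃ r, (fun w : ∀ j : Fin R, {i : ι // ρ i = j} → ℝ => w r)
            ⁻¹' {v | T r v ≠ G r u}) = 0 := by
          refine measure_iUnion_null (fun r => ?_)
          rw [hPpidef]
          exact Measure.pi_eval_preimage_null _ (hu r)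
        rw [ae_iff]
        refine measure_mono_null ?_ hnull
        intro w hw
        simp only [mem_setOf_eq] at hw
        simp only [mem_iUnion, mem_preimage, mem_setOf_eq]
        by_contra hcon
        push_neg at hcon
        apply hw
        rw [hHdef]
        exact Finset.sum_congr rfl (fun r _ => hcon r)
      have h5 : Ppi u ((fun w : ∀ r : Fin R, {i : ι // ρ i = r} → ℝ => ∑ r, T r (w r)) ⁻¹' s)
          = Ppi u {w : ∀ r : Fin R, {i : ι // ρ i = r} → ℝ | H u ∈ s} := by
        apply measure_congr
        rw [Filter.eventuallyEq_set]
        filter_upwards [hgood2] with w hw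
        simp only [mem_preimage, mem_setOf_eq, hw]
      rw [h5]
      by_cases hins : H u ∈ s
      · have : {w : ∀ r : Fin R, {i : ι // ρ i = r} → ℝ | H u ∈ s} = univ := by
          simp [hins]
        rw [this, measure_univ, indicator_of_mem (by exact hins)]
      · have : {w : ∀ r : Fin R, {i : ι // ρ i = r} → ℝ | H u ∈ s} = ∅ := by
          simp [hins]
        rw [this, measure_empty, indicator_of_notMem (by exact hins)]
    rw [lintegral_congr_ae hkey]
    have h6 : ∀ u : ℝ, (H ⁻¹' s).indicator (fun _ => (1:ENNReal)) u
        = (H ⁻¹' s).indicator 1 u := fun u => rfl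
    simp_rw [h6]
    rw [lintegral_indicator_one (hHmeas hs)]
  -- integral transfers
  have hcontf : ∀ y : ℝ, Continuous (fun t : ℝ => max (y - t) 0) :=
    fun y => (continuous_const.sub continuous_id).max continuous_const
  have hIμstar : ∀ y : ℝ, ∫ d, max (y - ∑ i ∈ S, d i) 0 ∂μstar
      = ∫ u, max (y - H u) 0 ∂(volume.restrict (Ioo (0:ℝ) 1)) := by
    intro y
    calc ∫ d, max (y - ∑ i ∈ S, d i) 0 ∂μstar
        = ∫ t, max (y - t) 0 ∂(μstar.map (fun d => ∑ i ∈ S, d i)) :=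
          (integral_map hDmeas.aemeasurable (hcontf y).aestronglyMeasurable).symm
      _ = ∫ t, max (y - t) 0 ∂((volume.restrict (Ioo (0:ℝ) 1)).map H) := by rw [hDdist]
      _ = ∫ u, max (y - H u) 0 ∂(volume.restrict (Ioo (0:ℝ) 1)) :=
          integral_map hHmeas.aemeasurable (hcontf y).aestronglyMeasurable
  have hblockint : ∀ (r : Fin R) (x : ℝ), ∫ w, max (x - T r w) 0 ∂(P r)
      = ∫ u, max (x - G r u) 0 ∂(volume.restrict (Ioo (0:ℝ) 1)) := by
    intro r x
    calc ∫ w, max (x - T r w) 0 ∂(P r)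
        = ∫ t, max (x - t) 0 ∂(L r) := by
          rw [hLdef]
          rw [integral_map (hTmeas r).aemeasurable (hmaxmeas x).aestronglyMeasurable]
      _ = ∫ t, max (x - t) 0 ∂((volume.restrict (Ioo (0:ℝ) 1)).map (G r)) := by rw [hmapG r]
      _ = ∫ u, max (x - G r u) 0 ∂(volume.restrict (Ioo (0:ℝ) 1)) :=
          integral_map (hGmeas r).aemeasurable (hmaxmeas x).aestronglyMeasurable
  -- nonnegativity of demand under any Fréchet-consistent measure
  have hfrechet_block : ∀ (μ : Measure (ι → ℝ)), μ ∈ frechet ρ P →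
      ∀ r, ∀ᵐ d ∂μ, ∀ i : {i : ι // ρ i = r}, 0 ≤ d i.1 := by
    intro μ hμ r
    have hmset : MeasurableSet {w : {i : ι // ρ i = r} → ℝ | ∀ i, 0 ≤ w i} := by
      have h1 : {w : {i : ι // ρ i = r} → ℝ | ∀ i, 0 ≤ w i} = ⋂ i, {w | 0 ≤ w i} := by
        ext w; simp [mem_iInter]
      rw [h1]
      exact MeasurableSet.iInter
        (fun i => measurableSet_le measurable_const (measurable_pi_apply i))
    have h2 : ∀ᵐ w ∂(μ.map (fun d (i : {i : ι // ρ i = r}) => d i.1)), ∀ i, 0 ≤ w i := by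
      rw [hμ.2 r]
      exact hnonneg r
    exact (ae_map_iff (hrestrmeas r).aemeasurable hmset).1 h2
  have hfrechet_nonneg : ∀ (μ : Measure (ι → ℝ)), μ ∈ frechet ρ P →
      ∀ᵐ d ∂μ, 0 ≤ ∑ i ∈ S, d i := by
    intro μ hμ
    have h3 : ∀ᵐ d ∂μ, ∀ r : Fin R, ∀ i : {i : ι // ρ i = r}, 0 ≤ d i.1 :=
      ae_all_iff.2 (hfrechet_block μ hμ)
    filter_upwards [h3] with d hd
    exact Finset.sum_nonneg (fun i _ => hd (ρ i) ⟨i, rfl⟩)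
  -- abbreviations
  set Y0 : ℝ := ∑ r, yq r with hY0def
  have hY00 : 0 ≤ Y0 := Finset.sum_nonneg (fun r _ => hyq0 r)
  set W : ℝ := ∑ r, ∫ w, max (yq r - T r w) 0 ∂(P r) with hWdef
  have hW0 : 0 ≤ W :=
    Finset.sum_nonneg (fun r _ => integral_nonneg (fun w => le_max_right _ _))
  have hVW : ∑ r, fdet ρ P p c S r (yq r) = (p - c) * Y0 - p * W := by
    rw [hY0def, hWdef, Finset.mul_sum, Finset.mul_sum, ← Finset.sum_sub_distrib]
    exact Finset.sum_congr rfl (fun r _ => hfd0 r (yq r))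
  -- Claim A : upper bound for every consistent measure at Y0
  have hIle : ∀ (μ : Measure (ι → ℝ)), μ ∈ frechet ρ P →
      ∫ d, max (Y0 - ∑ i ∈ S, d i) 0 ∂μ ≤ W := by
    intro μ hμ
    haveI := hμ.1
    have hint : ∀ r : Fin R,
        Integrable (fun d : ι → ℝ => max (yq r - T r (fun i : {i : ι // ρ i = r} => d i.1)) 0) μ := by
      intro r
      refine integrable_pos_part μ (Measurable.aestronglyMeasurable ?_) ?_ (yq r)
      · exact (hTmeas r).comp (hrestrmeas r)
      · filter_upwards [hfrechet_block μ hμ r] with d hd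
        exact Finset.sum_nonneg (fun i _ => hd i)
    have hptw : ∀ d : ι → ℝ, max (Y0 - ∑ i ∈ S, d i) 0
        ≤ ∑ r, max (yq r - T r (fun i : {i : ι // ρ i = r} => d i.1)) 0 := by
      intro d
      refine max_le ?_ (Finset.sum_nonneg (fun r _ => le_max_right _ _))
      rw [sum_blocks ρ S d, hY0def, ← Finset.sum_sub_distrib]
      exact Finset.sum_le_sum (fun r _ => le_max_left _ _)
    calc ∫ d, max (Y0 - ∑ i ∈ S, d i) 0 ∂μ
        ≤ ∫ d, ∑ r, max (yq r - T r (fun i : {i : ι // ρ i = r} => d i.1)) 0 ∂μ :=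
          integral_mono_of_nonneg (Eventually.of_forall (fun d => le_max_right _ _))
            (integrable_finset_sum _ (fun r _ => hint r)) (Eventually.of_forall hptw)
      _ = ∑ r, ∫ d, max (yq r - T r (fun i : {i : ι // ρ i = r} => d i.1)) 0 ∂μ :=
          integral_finset_sum _ (fun r _ => hint r)
      _ = W := by
          rw [hWdef]
          refine Finset.sum_congr rfl (fun r _ => ?_)
          have h6 : ∫ w, max (yq r - T r w) 0 ∂(P r)
              = ∫ w, max (yq r - T r w) 0 ∂(μ.map (fun d (i : {i : ι // ρ i = r}) => d i.1)) := by
            rw [hμ.2 r]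
          rw [h6, integral_map (hrestrmeas r).aemeasurable
            (Measurable.aestronglyMeasurable
              (show Measurable (fun w => max (yq r - T r w) 0) from (measurable_const.sub (hTmeas r)).max measurable_const))]
  -- boundedness of the inner supremum family
  have hbdda : ∀ y : ℝ, BddAbove (Set.range
      (fun μ : frechet ρ P => ∫ d, max (y - ∑ i ∈ S, d i) 0 ∂μ.1)) := by
    intro y
    refine ⟨max y 0, ?_⟩
    rintro x ⟨μ, rfl⟩
    haveI := μ.2.1
    exact integral_pos_part_le μ.1 (hfrechet_nonneg μ.1 μ.2) y
  have hgwc : ∀ y : ℝ, gwc ρ P p c S y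
      = (p - c) * y - p * ⨆ μ : frechet ρ P, ∫ d, max (y - ∑ i ∈ S, d i) 0 ∂μ.1 :=
    fun y => rfl
  -- pointwise comparisons on (0,1)
  have hHle : ∀ u : ℝ, 0 < u → u ≤ q → H u ≤ Y0 := by
    intro u hu huq
    rw [hHdef, hY0def]
    exact Finset.sum_le_sum (fun r _ => hGle r u hu huq)
  have hHge : ∀ u : ℝ, q < u → u ≤ 1 → Y0 ≤ H u := by
    intro u hqu hu1
    rw [hHdef, hY0def]
    exact Finset.sum_le_sum (fun r _ => hGge r u hqu hu1)
  have hlamIic : ((volume.restrict (Ioo (0:ℝ) 1)) (Iic q)).toReal = q := by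
    rw [Measure.restrict_apply measurableSet_Iic]
    have h1 : Iic q ∩ Ioo 0 1 = Ioc 0 q := by
      ext u
      simp only [mem_inter_iff, mem_Iic, mem_Ioo, mem_Ioc]
      constructor
      · rintro ⟨h1, h2, h3⟩; exact ⟨h2, h1⟩
      · rintro ⟨h1, h2⟩; exact ⟨h2, h1, lt_of_le_of_lt h2 hq1⟩
    rw [h1, Real.volume_Ioc]
    rw [ENNReal.toReal_ofReal (by linarith)]
    ring
  have hintH : ∀ x : ℝ, Integrable (fun u => max (x - H u) 0) (volume.restrict (Ioo (0:ℝ) 1)) :=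
    fun x => integrable_pos_part _ hHmeas.aestronglyMeasurable
      (Eventually.of_forall hH0) x
  have hintG : ∀ (r : Fin R) (x : ℝ),
      Integrable (fun u => max (x - G r u) 0) (volume.restrict (Ioo (0:ℝ) 1)) :=
    fun r x => integrable_pos_part _ (hGmeas r).aestronglyMeasurable
      (Eventually.of_forall (hG0 r)) x
  -- separability at Y0
  have hsep : ∫ u, max (Y0 - H u) 0 ∂(volume.restrict (Ioo (0:ℝ) 1)) = W := by
    have h1 : ∫ u, max (Y0 - H u) 0 ∂(volume.restrict (Ioo (0:ℝ) 1))
        = ∫ u, ∑ r, max (yq r - G r u) 0 ∂(volume.restrict (Ioo (0:ℝ) 1)) := by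
      refine integral_congr_ae ?_
      filter_upwards [ae_restrict_mem measurableSet_Ioo] with u hu
      by_cases hc1 : u ≤ q
      · have h2 : ∀ r : Fin R, G r u ≤ yq r := fun r => hGle r u hu.1 hc1
        rw [max_eq_left (by linarith [hHle u hu.1 hc1] : (0:ℝ) ≤ Y0 - H u)]
        rw [hY0def, hHdef, ← Finset.sum_sub_distrib]
        exact Finset.sum_congr rfl
          (fun r _ => (max_eq_left (by linarith [h2 r] : (0:ℝ) ≤ yq r - G r u)).symm)
      · push_neg at hc1
        have h2 : ∀ r : Fin R, yq r ≤ G r u := fun r => hGge r u hc1 (le_of_lt hu.2)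
        rw [max_eq_right (by linarith [hHge u hc1 (le_of_lt hu.2)] : Y0 - H u ≤ 0)]
        symm
        refine Finset.sum_eq_zero (fun r _ => ?_)
        exact max_eq_right (by linarith [h2 r] : yq r - G r u ≤ 0)
    rw [h1, integral_finset_sum _ (fun r _ => hintG r (yq r)), hWdef]
    exact Finset.sum_congr rfl (fun r _ => (hblockint r (yq r)).symm)
  -- newsvendor optimality of Y0 along the coupled demand
  have hnews : ∀ y : ℝ,
      (p - c) * y - p * ∫ u, max (y - H u) 0 ∂(volume.restrict (Ioo (0:ℝ) 1))
        ≤ (p - c) * Y0 - p * ∫ u, max (Y0 - H u) 0 ∂(volume.restrict (Ioo (0:ℝ) 1)) := by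
    intro y
    have hind : Integrable ((Iic q).indicator (fun _ => y - Y0)) (volume.restrict (Ioo (0:ℝ) 1)) :=
      (integrable_const (y - Y0)).indicator measurableSet_Iic
    have hptw : ∀ᵐ u ∂(volume.restrict (Ioo (0:ℝ) 1)),
        max (Y0 - H u) 0 + (Iic q).indicator (fun _ => y - Y0) u ≤ max (y - H u) 0 := by
      filter_upwards [ae_restrict_mem measurableSet_Ioo] with u hu
      by_cases hc1 : u ≤ q
      · have h3 : H u ≤ Y0 := hHle u hu.1 hc1
        rw [indicator_of_mem (mem_Iic.2 hc1), max_eq_left (by linarith : (0:ℝ) ≤ Y0 - H u)]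
        calc Y0 - H u + (y - Y0) = y - H u := by ring
          _ ≤ max (y - H u) 0 := le_max_left _ _
      · push_neg at hc1
        have h3 : Y0 ≤ H u := hHge u hc1 (le_of_lt hu.2)
        rw [indicator_of_notMem (by simpa using hc1), max_eq_right (by linarith : Y0 - H u ≤ 0),
          zero_add]
        exact le_max_right _ _
    have h4 := integral_mono_ae ((hintH Y0).add hind) (hintH y) hptw
    simp only [Pi.add_apply] at h4
    rw [integral_add (hintH Y0) hind, integral_indicator_const _ measurableSet_Iic,
      measureReal_def, hlamIic, smul_eq_mul] at h4
    have h7 : p * ((y - Y0) * q) = (p - c) * (y - Y0) := by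
      rw [hqdef]
      field_simp
    have h4p := mul_le_mul_of_nonneg_left h4 (le_of_lt hp)
    have h8 : p * (∫ u, max (Y0 - H u) 0 ∂(volume.restrict (Ioo (0:ℝ) 1)) + (y - Y0) * q)
        = p * ∫ u, max (Y0 - H u) 0 ∂(volume.restrict (Ioo (0:ℝ) 1)) + (p - c) * (y - Y0) := by
      rw [mul_add, h7]
    linarith
  -- Claim B
  haveI : Nonempty ({y : ℝ // 0 ≤ y}) := ⟨⟨0, le_rfl⟩⟩
  have hclaimB : ∀ y : ℝ, gwc ρ P p c S y ≤ ∑ r, fdet ρ P p c S r (yq r) := by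
    intro y
    rw [hgwc y, hVW]
    have h2 : ∫ u, max (y - H u) 0 ∂(volume.restrict (Ioo (0:ℝ) 1))
        ≤ ⨆ μ : frechet ρ P, ∫ d, max (y - ∑ i ∈ S, d i) 0 ∂μ.1 := by
      rw [← hIμstar y]
      exact le_ciSup (hbdda y) (⟨μstar, hmem⟩ : frechet ρ P)
    have h5 := hnews y
    rw [hsep] at h5
    have h2p := mul_le_mul_of_nonneg_left h2 (le_of_lt hp)
    linarith
  -- Claim A conclusion
  have hclaimA : ∑ r, fdet ρ P p c S r (yq r) ≤ gwc ρ P p c S Y0 := by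
    rw [hgwc Y0, hVW]
    have h1 : (⨆ μ : frechet ρ P, ∫ d, max (Y0 - ∑ i ∈ S, d i) 0 ∂μ.1) ≤ W :=
      Real.iSup_le (fun μ => hIle μ.1 μ.2) hW0
    have h1p := mul_le_mul_of_nonneg_left h1 (le_of_lt hp)
    linarith
  have hgY0 : gwc ρ P p c S Y0 = ∑ r, fdet ρ P p c S r (yq r) :=
    le_antisymm (hclaimB Y0) hclaimA
  have hsup : (⨆ y : {y : ℝ // 0 ≤ y}, gwc ρ P p c S y.1) = ∑ r, fdet ρ P p c S r (yq r) := by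
    apply le_antisymm
    · exact ciSup_le (fun y => hclaimB y.1)
    · rw [← hgY0]
      refine le_ciSup (f := fun y : {y : ℝ // 0 ≤ y} => gwc ρ P p c S y.1) ?_ ⟨Y0, hY00⟩
      refine ⟨∑ r, fdet ρ P p c S r (yq r), ?_⟩
      rintro x ⟨y, rfl⟩
      exact hclaimB y.1
  exact ⟨hgY0.trans hsup.symm, hsup⟩
end

section
/- The robust newsvendor game (N, Y, V(P(P_1,...,P_R))) always has an imputation; equivalently, Σ_{i∈N} v̄_i ≤ v_P(y*_wc(N), N) for all P ∈ P(P_1,...,P_R), where v̄_i is retailer i's standalone optimal expected profit. -/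
open MeasureTheory

/-- Expected newsvendor profit of coalition `S` under joint distribution `μ` and order `y`. -/
noncomputable def vP {ι : Type*} [Fintype ι] (p c : ℝ) (μ : Measure (ι → ℝ))
    (y : ℝ) (S : Finset ι) : ℝ :=
  (p - c) * y - p * ∫ d, max (y - ∑ i ∈ S, d i) 0 ∂μ

/-- Deterministic newsvendor objective of the full block `N_r` under the marginal `P r`. -/
noncomputable def fblock {ι : Type*} [Fintype ι] {R : ℕ} (ρ : ι → Fin R)
    (P : (r : Fin R) → Measure ({i : ι // ρ i = r} → ℝ))
    (p c : ℝ) (r : Fin R) (x : ℝ) : ℝ :=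
  (p - c) * x - p * ∫ w, max (x - ∑ i : {i : ι // ρ i = r}, w i) 0 ∂(P r)

/-- Retailer `i`'s standalone optimal expected profit `v̄_i` (its demand distribution,
the `i`-marginal of `P (ρ i)`, is known). -/
noncomputable def vbarInd {ι : Type*} [Fintype ι] {R : ℕ} (ρ : ι → Fin R)
    (P : (r : Fin R) → Measure ({i : ι // ρ i = r} → ℝ))
    (p c : ℝ) (i : ι) : ℝ :=
  ⨆ x : {x : ℝ // 0 ≤ x},
    (p - c) * x.1 - p * ∫ w, max (x.1 - w ⟨i, rfl⟩) 0 ∂(P (ρ i))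

/- ### Auxiliary lemmas -/

/-- Subadditivity of the positive part over finite sums. -/
lemma posPart_sum_le {α : Type*} (s : Finset α) (a : α → ℝ) :
    max (∑ i ∈ s, a i) 0 ≤ ∑ i ∈ s, max (a i) 0 := by
  refine max_le (Finset.sum_le_sum fun i _ => le_max_left _ _)
    (Finset.sum_nonneg fun i _ => le_max_right _ _)

/-- If every simultaneous choice of order quantities yields total profit at most `C`,
then the sum of the individual suprema is at most `C`. -/
lemma sum_iSup_le {α : Type*} [DecidableEq α] (s : Finset α)
    (f : α → {x : ℝ // 0 ≤ x} → ℝ) (C : ℝ) :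
    (∀ g : α → {x : ℝ // 0 ≤ x}, ∑ i ∈ s, f i (g i) ≤ C) →
      ∑ i ∈ s, (⨆ x, f i x) ≤ C := by
  have hne : Nonempty {x : ℝ // 0 ≤ x} := ⟨⟨0, le_rfl⟩⟩
  induction s using Finset.induction_on generalizing C with
  | empty => intro h; simpa using h fun _ => ⟨0, le_rfl⟩
  | @insert a s ha ih =>
    intro h
    rw [Finset.sum_insert ha]
    have h1 : (⨆ x, f a x) ≤ C - ∑ i ∈ s, ⨆ x, f i x := by
      apply ciSup_le
      intro xa
      have h2 : ∑ i ∈ s, (⨆ x, f i x) ≤ C - f a xa := by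
        apply ih
        intro g
        have h3 := h (Function.update g a xa)
        rw [Finset.sum_insert ha, Function.update_self] at h3
        have heq : ∑ i ∈ s, f i (Function.update g a xa i) = ∑ i ∈ s, f i (g i) :=
          Finset.sum_congr rfl fun i hi => by
            rw [Function.update_of_ne (by rintro rfl; exact ha hi)]
        linarith [h3, heq.symm.le, heq.le]
      linarith
    linarith

/-- Transporting the definition of `vbarInd` along the fiber equation. -/
lemma vbar_eq {ι : Type*} [Fintype ι] {R : ℕ} (ρ : ι → Fin R)
    (P : (r : Fin R) → Measure ({i : ι // ρ i = r} → ℝ))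
    (p c : ℝ) (r : Fin R) (i : {j : ι // ρ j = r}) :
    vbarInd ρ P p c i.1 =
      ⨆ x : {x : ℝ // 0 ≤ x},
        (p - c) * x.1 - p * ∫ w, max (x.1 - w i) 0 ∂(P r) := by
  obtain ⟨i, hi⟩ := i
  subst hi
  rfl

/-- Integrability of a positive-part integrand bounded a.e. -/
lemma integrable_posPart {X : Type*} [MeasurableSpace X] (ν : Measure X)
    [IsFiniteMeasure ν] (φ : X → ℝ) (hφ : Measurable φ) (b : ℝ)
    (hb : ∀ᵐ w ∂ν, max (φ w) 0 ≤ b) :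
    Integrable (fun w => max (φ w) 0) ν := by
  refine Integrable.mono' (integrable_const b)
    ((hφ.max measurable_const).aestronglyMeasurable) ?_
  filter_upwards [hb] with w hw
  rw [Real.norm_eq_abs, abs_of_nonneg (le_max_right _ _)]
  exact hw

/-- The robust newsvendor game always has an imputation; equivalently,
`∑_i v̄_i ≤ v_P(y*_wc(N), N)` for every `P` in the Fréchet class, where
`y*_wc(N) = ∑_r y*(N_r)` is the worst-case optimal order quantity. -/
theorem stmt_11 {ι : Type*} [Fintype ι] {R : ℕ} (ρ : ι → Fin R)
    (P : (r : Fin R) → Measure ({i : ι // ρ i = r} → ℝ))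
    (hP : ∀ r, IsProbabilityMeasure (P r))
    (hnonneg : ∀ r, ∀ᵐ w ∂(P r), ∀ i, 0 ≤ w i)
    (hbdd : ∀ r, ∃ M : ℝ, ∀ᵐ w ∂(P r), ∀ i, w i ≤ M)
    (p c : ℝ) (hc : 0 < c) (hcp : c < p)
    (yq : Fin R → ℝ)
    (hyq : ∀ r : Fin R, 0 ≤ yq r ∧
      ∀ x : ℝ, 0 ≤ x → fblock ρ P p c r x ≤ fblock ρ P p c r (yq r)) :
    ∀ μ ∈ frechet ρ P,
      ∑ i : ι, vbarInd ρ P p c i ≤ vP p c μ (∑ r, yq r) Finset.univ := by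
  classical
  rintro μ ⟨hμprob, hμmarg⟩
  haveI := fun r => hP r
  -- sum measurability on blocks
  have hSmeas : ∀ r : Fin R,
      Measurable (fun w : {i : ι // ρ i = r} → ℝ => ∑ i, w i) :=
    fun r => Finset.measurable_sum _ fun i _ => measurable_pi_apply i
  -- a.e. nonnegativity of block sums
  have hSnn : ∀ r : Fin R, ∀ᵐ w ∂(P r), 0 ≤ ∑ i : {i : ι // ρ i = r}, w i := by
    intro r
    filter_upwards [hnonneg r] with w hw
    exact Finset.sum_nonneg fun i _ => hw i
  -- integrability of block positive parts under P r
  have hIntBlock : ∀ (r : Fin R) (x : ℝ),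
      Integrable (fun w : {i : ι // ρ i = r} → ℝ =>
        max (x - ∑ i, w i) 0) (P r) := by
    intro r x
    refine integrable_posPart (P r) _ ((measurable_const.sub (hSmeas r))) (max x 0) ?_
    filter_upwards [hSnn r] with w hw
    exact max_le_max (by linarith) le_rfl
  -- integrability of single-coordinate positive parts under P r
  have hIntInd : ∀ (r : Fin R) (i : {j : ι // ρ j = r}) (x : ℝ),
      Integrable (fun w : {j : ι // ρ j = r} → ℝ => max (x - w i) 0) (P r) := by
    intro r i x
    refine integrable_posPart (P r) _ (measurable_const.sub (measurable_pi_apply i))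
      (max x 0) ?_
    filter_upwards [hnonneg r] with w hw
    exact max_le_max (by linarith [hw i]) le_rfl
  -- STEP A : ∑ i, v̄_i ≤ ∑ r, fblock r (yq r)
  have stepA : ∑ i : ι, vbarInd ρ P p c i ≤ ∑ r, fblock ρ P p c r (yq r) := by
    rw [← Fintype.sum_fiberwise ρ (fun i => vbarInd ρ P p c i)]
    refine Finset.sum_le_sum fun r _ => ?_
    calc ∑ i : {i : ι // ρ i = r}, vbarInd ρ P p c i.1
        = ∑ i : {i : ι // ρ i = r}, ⨆ x : {x : ℝ // 0 ≤ x},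
            ((p - c) * x.1 - p * ∫ w, max (x.1 - w i) 0 ∂(P r)) :=
          Finset.sum_congr rfl fun i _ => vbar_eq ρ P p c r i
      _ ≤ fblock ρ P p c r (yq r) := by
          apply sum_iSup_le
          intro g
          set x : ℝ := ∑ i : {i : ι // ρ i = r}, (g i).1 with hxdef
          have hx : 0 ≤ x := Finset.sum_nonneg fun i _ => (g i).2
          have hfin : fblock ρ P p c r x ≤ fblock ρ P p c r (yq r) := (hyq r).2 x hx
          refine le_trans ?_ hfin
          -- expand sums
          have hsum : ∑ i : {i : ι // ρ i = r},
              ((p - c) * (g i).1 - p * ∫ w, max ((g i).1 - w i) 0 ∂(P r))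
              = (p - c) * x -
                p * ∑ i : {i : ι // ρ i = r}, ∫ w, max ((g i).1 - w i) 0 ∂(P r) := by
            rw [Finset.sum_sub_distrib, ← Finset.mul_sum, ← Finset.mul_sum]
          rw [hsum, fblock]
          have hint : (∫ w, max (x - ∑ i : {i : ι // ρ i = r}, w i) 0 ∂(P r))
              ≤ ∑ i : {i : ι // ρ i = r}, ∫ w, max ((g i).1 - w i) 0 ∂(P r) := by
            rw [← integral_finset_sum _ (fun i _ => hIntInd r i (g i).1)]
            refine integral_mono (hIntBlock r x)
              (integrable_finset_sum _ fun i _ => hIntInd r i (g i).1) ?_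
            intro w
            show max (x - ∑ i : {i : ι // ρ i = r}, w i) 0
              ≤ ∑ i : {i : ι // ρ i = r}, max ((g i).1 - w i) 0
            have hrw : x - ∑ i : {i : ι // ρ i = r}, w i
                = ∑ i : {i : ι // ρ i = r}, ((g i).1 - w i) := by
              rw [Finset.sum_sub_distrib]
            rw [hrw]
            exact posPart_sum_le _ _
          have hp : 0 < p := lt_trans hc hcp
          nlinarith [hint]
  -- STEP B : ∑ r, fblock r (yq r) ≤ vP p c μ Y univ
  refine le_trans stepA ?_
  set Y : ℝ := ∑ r, yq r with hY
  -- projections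
  set proj : (r : Fin R) → (ι → ℝ) → ({i : ι // ρ i = r} → ℝ) :=
    fun r d i => d i.1 with hproj
  have hprojmeas : ∀ r, Measurable (proj r) :=
    fun r => measurable_pi_lambda _ fun i => measurable_pi_apply i.1
  -- block integrands pulled back to μ
  have hblockmeas : ∀ r : Fin R,
      Measurable (fun w : {i : ι // ρ i = r} → ℝ => max (yq r - ∑ i, w i) 0) :=
    fun r => (measurable_const.sub (hSmeas r)).max measurable_const
  have htransfer : ∀ r : Fin R,
      (∫ w, max (yq r - ∑ i : {i : ι // ρ i = r}, w i) 0 ∂(P r))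
        = ∫ d, max (yq r - ∑ i : {i : ι // ρ i = r}, d i.1) 0 ∂μ := by
    intro r
    rw [← hμmarg r]
    exact integral_map (hprojmeas r).aemeasurable
      ((hblockmeas r).aestronglyMeasurable)
  have hIntPull : ∀ r : Fin R,
      Integrable (fun d : ι → ℝ =>
        max (yq r - ∑ i : {i : ι // ρ i = r}, d i.1) 0) μ := by
    intro r
    have := (integrable_map_measure ((hblockmeas r).aestronglyMeasurable)
      (hprojmeas r).aemeasurable).mp (by rw [hμmarg r]; exact hIntBlock r (yq r))
    exact this
  -- pointwise bound for the grand coalition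
  have hpt : ∀ d : ι → ℝ,
      max (Y - ∑ i : ι, d i) 0
        ≤ ∑ r, max (yq r - ∑ i : {i : ι // ρ i = r}, d i.1) 0 := by
    intro d
    have hsplit : Y - ∑ i : ι, d i
        = ∑ r, (yq r - ∑ i : {i : ι // ρ i = r}, d i.1) := by
      rw [Finset.sum_sub_distrib, hY, Fintype.sum_fiberwise ρ d]
    rw [hsplit]
    exact posPart_sum_le _ _
  have hIntG : Integrable (fun d : ι → ℝ =>
      ∑ r, max (yq r - ∑ i : {i : ι // ρ i = r}, d i.1) 0) μ :=
    integrable_finset_sum _ fun r _ => hIntPull r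
  have hmeasF : Measurable (fun d : ι → ℝ => max (Y - ∑ i : ι, d i) 0) :=
    (measurable_const.sub (Finset.measurable_sum _ fun i _ =>
      measurable_pi_apply i)).max measurable_const
  have hIntF : Integrable (fun d : ι → ℝ => max (Y - ∑ i : ι, d i) 0) μ := by
    refine Integrable.mono' hIntG hmeasF.aestronglyMeasurable ?_
    refine Filter.Eventually.of_forall fun d => ?_
    rw [Real.norm_eq_abs, abs_of_nonneg (le_max_right _ _)]
    exact hpt d
  -- put it together
  have hkey : (∫ d, max (Y - ∑ i : ι, d i) 0 ∂μ)
      ≤ ∑ r, ∫ w, max (yq r - ∑ i : {i : ι // ρ i = r}, w i) 0 ∂(P r) := by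
    calc (∫ d, max (Y - ∑ i : ι, d i) 0 ∂μ)
        ≤ ∫ d, ∑ r, max (yq r - ∑ i : {i : ι // ρ i = r}, d i.1) 0 ∂μ :=
          integral_mono hIntF hIntG hpt
      _ = ∑ r, ∫ d, max (yq r - ∑ i : {i : ι // ρ i = r}, d i.1) 0 ∂μ :=
          integral_finset_sum _ fun r _ => hIntPull r
      _ = ∑ r, ∫ w, max (yq r - ∑ i : {i : ι // ρ i = r}, w i) 0 ∂(P r) :=
          Finset.sum_congr rfl fun r _ => (htransfer r).symm
  have hp : 0 < p := lt_trans hc hcp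
  have hsum2 : ∑ r, fblock ρ P p c r (yq r)
      = (p - c) * Y -
        p * ∑ r, ∫ w, max (yq r - ∑ i : {i : ι // ρ i = r}, w i) 0 ∂(P r) := by
    simp only [fblock]
    rw [Finset.sum_sub_distrib, ← Finset.mul_sum, ← Finset.mul_sum, hY]
  rw [hsum2, vP]
  nlinarith [hkey]
end

section
/- For every P ∈ P(P_1,...,P_R), v_P(y*_wc(N), N) ≥ Σ_{r=1}^R v̄(N_r), where y*_wc(N) = Σ_{r=1}^R y*(N_r). -/
open MeasureTheory

/-- For every `P` in the Fréchet class, `v_P(y*_wc(N), N) ≥ ∑_r v̄(N_r)`, where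
`y*_wc(N) = ∑_r y*(N_r)` and `y*(N_r)` maximizes the block-`r` deterministic newsvendor
objective (i.e. it is the `(p-c)/p`-quantile of `d̃(N_r)`). -/
theorem stmt_12 {ι : Type*} [Fintype ι] {R : ℕ} (ρ : ι → Fin R)
    (P : (r : Fin R) → Measure ({i : ι // ρ i = r} → ℝ))
    (hP : ∀ r, IsProbabilityMeasure (P r))
    (hnonneg : ∀ r, ∀ᵐ w ∂(P r), ∀ i, 0 ≤ w i)
    (hbdd : ∀ r, ∃ M : ℝ, ∀ᵐ w ∂(P r), ∀ i, w i ≤ M)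
    (p c : ℝ) (hc : 0 < c) (hcp : c < p)
    (yq : Fin R → ℝ)
    (hyq : ∀ r : Fin R, 0 ≤ yq r ∧
      ∀ x : ℝ, 0 ≤ x → fblock ρ P p c r x ≤ fblock ρ P p c r (yq r)) :
    ∀ μ ∈ frechet ρ P,
      ∑ r, fblock ρ P p c r (yq r) ≤ vP p c μ (∑ r, yq r) Finset.univ := by
  intro μ hμ
  obtain ⟨hprob, hmarg⟩ := hμ
  have hp : 0 < p := hc.trans hcp
  -- projection maps
  have hgmeas : ∀ r : Fin R, Measurable (fun (d : ι → ℝ) (i : {i : ι // ρ i = r}) => d i.1) :=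
    fun r => measurable_pi_lambda _ (fun i => measurable_pi_apply i.1)
  -- block penalty functions on the joint space
  set h : (Fin R) → (ι → ℝ) → ℝ :=
    fun r d => max (yq r - ∑ i : {i : ι // ρ i = r}, d i.1) 0 with hh
  have hhmeas : ∀ r, Measurable (h r) := by
    intro r
    exact (measurable_const.sub
      (Finset.measurable_sum _ fun i _ => measurable_pi_apply i.1)).max measurable_const
  -- a.e. nonnegativity of each coordinate under μ
  have hnnμ : ∀ᵐ d ∂μ, ∀ i, 0 ≤ d i := by
    rw [ae_all_iff]
    intro i
    have h1 : ∀ᵐ w ∂(P (ρ i)), ∀ j, 0 ≤ w j := hnonneg (ρ i)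
    rw [← hmarg (ρ i)] at h1
    have hs : MeasurableSet {w : ({j : ι // ρ j = ρ i} → ℝ) | ∀ j, 0 ≤ w j} := by
      rw [Set.setOf_forall]
      exact MeasurableSet.iInter fun j =>
        measurableSet_le measurable_const (measurable_pi_apply j)
    have h2 := (ae_map_iff (hgmeas (ρ i)).aemeasurable hs).mp h1
    filter_upwards [h2] with d hd
    exact hd ⟨i, rfl⟩
  -- Integrability of each block penalty under μ
  have hint : ∀ r, Integrable (h r) μ := by
    intro r
    refine Integrable.mono' (integrable_const (max (yq r) 0))
      ((hhmeas r).aestronglyMeasurable) ?_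
    filter_upwards [hnnμ] with d hd
    rw [Real.norm_eq_abs, abs_of_nonneg (le_max_right _ _)]
    refine max_le ?_ (le_max_right _ _)
    have hS : (0:ℝ) ≤ ∑ i : {i : ι // ρ i = r}, d i.1 :=
      Finset.sum_nonneg fun i _ => hd i.1
    have := le_max_left (yq r) 0
    linarith
  -- the total penalty
  set H : (ι → ℝ) → ℝ := fun d => max ((∑ r, yq r) - ∑ i, d i) 0 with hH
  have hHmeas : Measurable H :=
    (measurable_const.sub
      (Finset.measurable_sum _ fun i _ => measurable_pi_apply i)).max measurable_const
  have hHint : Integrable H μ := by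
    refine Integrable.mono' (integrable_const (max (∑ r, yq r) 0))
      hHmeas.aestronglyMeasurable ?_
    filter_upwards [hnnμ] with d hd
    rw [Real.norm_eq_abs, abs_of_nonneg (le_max_right _ _)]
    refine max_le ?_ (le_max_right _ _)
    have hS : (0:ℝ) ≤ ∑ i, d i := Finset.sum_nonneg fun i _ => hd i
    have := le_max_left (∑ r, yq r) 0
    linarith
  -- pointwise subadditivity: H ≤ ∑ r, h r
  have hpt : ∀ d : ι → ℝ, H d ≤ ∑ r, h r d := by
    intro d
    have hsum : ∑ i, d i = ∑ r, ∑ i : {i : ι // ρ i = r}, d i.1 :=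
      (Fintype.sum_fiberwise ρ d).symm
    have : (∑ r, yq r) - ∑ i, d i = ∑ r, (yq r - ∑ i : {i : ι // ρ i = r}, d i.1) := by
      rw [hsum, Finset.sum_sub_distrib]
    rw [hH]
    simp only [this]
    refine max_le (Finset.sum_le_sum fun r _ => le_max_left _ _)
      (Finset.sum_nonneg fun r _ => le_max_right _ _)
  -- main integral inequality
  have key : ∫ d, H d ∂μ ≤ ∑ r, ∫ d, h r d ∂μ := by
    rw [← integral_finset_sum _ (fun r _ => hint r)]
    exact integral_mono hHint (integrable_finset_sum _ fun r _ => hint r) hpt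
  -- transfer block integrals to the marginals
  have htrans : ∀ r, ∫ w, max (yq r - ∑ i : {i : ι // ρ i = r}, w i) 0 ∂(P r)
      = ∫ d, h r d ∂μ := by
    intro r
    rw [← hmarg r, integral_map (hgmeas r).aemeasurable]
    exact ((measurable_const.sub
      (Finset.measurable_sum _ fun i _ => measurable_pi_apply i)).max
      measurable_const).aestronglyMeasurable
  -- conclude
  simp only [fblock, vP]
  rw [Finset.sum_sub_distrib, ← Finset.mul_sum, ← Finset.mul_sum]
  have h1 : ∑ r, ∫ w, max (yq r - ∑ i : {i : ι // ρ i = r}, w i) 0 ∂(P r)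
      = ∑ r, ∫ d, h r d ∂μ := Finset.sum_congr rfl fun r _ => htrans r
  rw [h1]
  have h2 : ∫ d, max ((∑ r, yq r) - ∑ i ∈ Finset.univ, d i) 0 ∂μ = ∫ d, H d ∂μ := rfl
  rw [h2]
  nlinarith [key, hp]
end

section
/- There exists a robust newsvendor game with three players whose core is empty: with N = {1,2,3}, N_1 = {1,2}, N_2 = {3}, d̃_1 ~ U(0,D), d̃_2 = D − d̃_1, d̃_3 ~ U(0,D), 0 < c < p, and D > 0, one has v_max(y,{1,2}) = 2p/(3p−c) and v_max(y,{1,3}), v_max(y,{2,3}) ≥ 2p/(3p−c) for y = y*_wc(N), so that v_max(y,{1,2}) + v_max(y,{1,3}) + v_max(y,{2,3}) ≥ 6p/(3p−c) > 2, contradicting existence of z with Σ z_i = 1 and Σ_{i∈S} z_i ≥ v_max(y,S) for all two-player S. -/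
open MeasureTheory

/-- Uniform distribution on `(0, D)`. -/
noncomputable def unif (D : ℝ) : Measure ℝ :=
  (ENNReal.ofReal D)⁻¹ • volume.restrict (Set.Ioo 0 D)

/-- Expected newsvendor profit of coalition `S ⊆ {1,2,3}` under joint law `μ`, order `y`. -/
noncomputable def vP3 (p c : ℝ) (μ : Measure (Fin 3 → ℝ)) (y : ℝ) (S : Finset (Fin 3)) : ℝ :=
  (p - c) * y - p * ∫ d, max (y - ∑ i ∈ S, d i) 0 ∂μ

/-- Fréchet class for Example 1: `(d̃_1, d̃_2)` perfectly negatively correlated uniforms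
summing to `D`, and `d̃_3 ~ U(0,D)`. -/
def frechet3 (D : ℝ) : Set (Measure (Fin 3 → ℝ)) :=
  {μ | IsProbabilityMeasure μ ∧
    μ.map (fun d => (d 0, d 1)) = (unif D).map (fun t => (t, D - t)) ∧
    μ.map (fun d => d 2) = unif D}

/-- `v_max(y,S) = max_{P ∈ P(P_1,P_2)} (max_{γ ≥ 0} v_P(γ,S)) / v_P(y,N)`. -/
noncomputable def vmax3 (p c D y : ℝ) (S : Finset (Fin 3)) : ℝ :=
  ⨆ μ : frechet3 D, (⨆ γ : {γ : ℝ // 0 ≤ γ}, vP3 p c μ.1 γ.1 S) / vP3 p c μ.1 y Finset.univ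

lemma unif_null {D : ℝ} {s : Set ℝ} (hs : s ∩ Set.Ioo 0 D = ∅) : unif D s = 0 := by
  unfold unif
  have h : volume.restrict (Set.Ioo 0 D) s = 0 := by
    rw [Measure.restrict_apply' measurableSet_Ioo, hs]; simp
  simp [h]

lemma unif_prob {D : ℝ} (hD : 0 < D) : IsProbabilityMeasure (unif D) := by
  constructor
  unfold unif
  rw [Measure.smul_apply, Measure.restrict_apply MeasurableSet.univ]
  simp [Real.volume_Ioo, ENNReal.inv_mul_cancel, hD.le, (ENNReal.ofReal_pos.mpr hD).ne']

lemma ae_unif {D : ℝ} : ∀ᵐ t ∂(unif D), t ∈ Set.Ioo 0 D := by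
  rw [MeasureTheory.ae_iff]
  apply unif_null
  ext t; simp +contextual

lemma unif_integral_max {D a : ℝ} (hD : 0 < D) (ha : 0 < a) (haD : a < D) :
    ∫ t, max (a - t) 0 ∂(unif D) = a ^ 2 / (2 * D) := by
  have hcont : Continuous fun t : ℝ => max (a - t) 0 :=
    (continuous_const.sub continuous_id).max continuous_const
  unfold unif
  rw [integral_smul_measure]
  have h1 : ∫ t in Set.Ioo 0 D, max (a - t) 0 = ∫ t in Set.Ioc 0 D, max (a - t) 0 :=
    (integral_Ioc_eq_integral_Ioo).symm
  have h2 : ∫ t in Set.Ioc 0 D, max (a - t) 0 = ∫ t in (0)..(D), max (a - t) 0 :=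
    (intervalIntegral.integral_of_le hD.le).symm
  have h3 : ∫ t in (0)..(D), max (a - t) 0
      = (∫ t in (0)..(a), max (a - t) 0) + ∫ t in (a)..(D), max (a - t) 0 := by
    rw [intervalIntegral.integral_add_adjacent_intervals] <;>
      exact hcont.intervalIntegrable _ _
  have h4 : ∫ t in (0)..(a), max (a - t) 0 = ∫ t in (0)..(a), (a - t) := by
    apply intervalIntegral.integral_congr
    intro t ht
    rw [Set.uIcc_of_le ha.le] at ht
    exact max_eq_left (by linarith [ht.1, ht.2])
  have h5 : ∫ t in (a)..(D), max (a - t) 0 = 0 := by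
    have he : Set.EqOn (fun t => max (a - t) 0) (fun _ => (0:ℝ)) (Set.uIcc a D) := by
      intro t ht
      rw [Set.uIcc_of_le haD.le] at ht
      exact max_eq_right (by linarith [ht.1])
    rw [intervalIntegral.integral_congr he]
    simp
  have h6 : ∫ t in (0)..(a), (a - t) = a ^ 2 / 2 := by
    open intervalIntegral in
    rw [integral_sub intervalIntegrable_const intervalIntegrable_id, integral_id]
    simp
    ring
  rw [h1, h2, h3, h4, h5, h6]
  rw [ENNReal.toReal_inv, ENNReal.toReal_ofReal hD.le]
  field_simp
  rw [smul_eq_mul]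
  linear_combination (a ^ 2) * (inv_mul_cancel₀ hD.ne' : D⁻¹ * D = 1)


lemma meas_pair : Measurable (fun d : Fin 3 → ℝ => (d 0, d 1)) :=
  (measurable_pi_apply 0).prodMk (measurable_pi_apply 1)

lemma meas_tD {D : ℝ} : Measurable (fun t : ℝ => (t, D - t)) := by fun_prop

lemma frechet3_ae_sum {D : ℝ} {μ : Measure (Fin 3 → ℝ)} (hμ : μ ∈ frechet3 D) :
    ∀ᵐ d ∂μ, d 0 + d 1 = D := by
  rw [MeasureTheory.ae_iff]
  have hset : MeasurableSet {q : ℝ × ℝ | ¬ q.1 + q.2 = D} :=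
    ((measurable_fst.add measurable_snd) (measurableSet_singleton D)).compl
  have : {d : Fin 3 → ℝ | ¬ d 0 + d 1 = D}
      = (fun d : Fin 3 → ℝ => (d 0, d 1)) ⁻¹' {q : ℝ × ℝ | ¬ q.1 + q.2 = D} := rfl
  rw [this, ← Measure.map_apply meas_pair hset, hμ.2.1,
    Measure.map_apply meas_tD hset]
  convert measure_empty
  · ext t; simp
  · infer_instance

lemma frechet3_ae_mem {D : ℝ} {μ : Measure (Fin 3 → ℝ)} (hμ : μ ∈ frechet3 D) :
    ∀ᵐ d ∂μ, ∀ i, d i ∈ Set.Ioo 0 D := by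
  have h0 : ∀ᵐ d ∂μ, d 0 ∈ Set.Ioo 0 D := by
    rw [MeasureTheory.ae_iff]
    have hset : MeasurableSet {q : ℝ × ℝ | ¬ q.1 ∈ Set.Ioo 0 D} :=
      (measurable_fst measurableSet_Ioo).compl
    have : {d : Fin 3 → ℝ | ¬ d 0 ∈ Set.Ioo 0 D}
        = (fun d : Fin 3 → ℝ => (d 0, d 1)) ⁻¹' {q : ℝ × ℝ | ¬ q.1 ∈ Set.Ioo 0 D} := rfl
    rw [this, ← Measure.map_apply meas_pair hset, hμ.2.1,
      Measure.map_apply meas_tD hset]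
    apply unif_null
    ext t; simp +contextual
  have h1 : ∀ᵐ d ∂μ, d 1 ∈ Set.Ioo 0 D := by
    rw [MeasureTheory.ae_iff]
    have hset : MeasurableSet {q : ℝ × ℝ | ¬ q.2 ∈ Set.Ioo 0 D} :=
      (measurable_snd measurableSet_Ioo).compl
    have : {d : Fin 3 → ℝ | ¬ d 1 ∈ Set.Ioo 0 D}
        = (fun d : Fin 3 → ℝ => (d 0, d 1)) ⁻¹' {q : ℝ × ℝ | ¬ q.2 ∈ Set.Ioo 0 D} := rfl
    rw [this, ← Measure.map_apply meas_pair hset, hμ.2.1,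
      Measure.map_apply meas_tD hset]
    apply unif_null
    ext t
    simp only [Set.mem_inter_iff, Set.mem_preimage, Set.mem_setOf_eq, Set.mem_Ioo,
      Set.mem_empty_iff_false, iff_false, not_and]
    intro h ht1 ht2
    exact h (by linarith) (by linarith)
  have h2 : ∀ᵐ d ∂μ, d 2 ∈ Set.Ioo 0 D := by
    rw [MeasureTheory.ae_iff]
    have hset : MeasurableSet {t : ℝ | ¬ t ∈ Set.Ioo 0 D} := measurableSet_Ioo.compl
    have : {d : Fin 3 → ℝ | ¬ d 2 ∈ Set.Ioo 0 D}
        = (fun d : Fin 3 → ℝ => d 2) ⁻¹' {t : ℝ | ¬ t ∈ Set.Ioo 0 D} := rfl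
    rw [this, ← Measure.map_apply (measurable_pi_apply 2) hset, hμ.2.2]
    apply unif_null
    ext t; simp +contextual
  filter_upwards [h0, h1, h2] with d hd0 hd1 hd2 i
  fin_cases i <;> assumption

lemma meas_maxfun (γ : ℝ) (S : Finset (Fin 3)) :
    Measurable (fun d : Fin 3 → ℝ => max (γ - ∑ i ∈ S, d i) 0) :=
  ((measurable_const.sub (Finset.measurable_sum S fun i _ => measurable_pi_apply i)).max
    measurable_const)

lemma integrable_maxfun {D : ℝ} {μ : Measure (Fin 3 → ℝ)} (hμ : μ ∈ frechet3 D)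
    {γ : ℝ} (hγ : 0 ≤ γ) (S : Finset (Fin 3)) :
    Integrable (fun d => max (γ - ∑ i ∈ S, d i) 0) μ := by
  have : IsProbabilityMeasure μ := hμ.1
  refine Integrable.mono' (integrable_const γ) (meas_maxfun γ S).aestronglyMeasurable ?_
  filter_upwards [frechet3_ae_mem hμ] with d hd
  have hs : 0 ≤ ∑ i ∈ S, d i := Finset.sum_nonneg fun i _ => (hd i).1.le
  rw [Real.norm_eq_abs, abs_of_nonneg (le_max_right _ _)]
  have : γ - ∑ i ∈ S, d i ≤ γ := by linarith
  exact max_le this hγ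

lemma vP3_bound {p c D : ℝ} (hc : 0 < c) (hcp : c < p) (hD : 0 < D)
    {μ : Measure (Fin 3 → ℝ)} (hμ : μ ∈ frechet3 D)
    {γ : ℝ} (hγ : 0 ≤ γ) (S : Finset (Fin 3)) :
    vP3 p c μ γ S ≤ 3 * D * (p - c) := by
  have : IsProbabilityMeasure μ := hμ.1
  unfold vP3
  rcases le_total γ (3 * D) with h | h
  · have hI : 0 ≤ ∫ d, max (γ - ∑ i ∈ S, d i) 0 ∂μ :=
      integral_nonneg fun d => le_max_right _ _
    nlinarith
  · have hI : γ - 3 * D ≤ ∫ d, max (γ - ∑ i ∈ S, d i) 0 ∂μ := by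
      have hmono := integral_mono_ae (integrable_const (γ - 3 * D))
        (integrable_maxfun hμ hγ S) ?_
      · simpa using hmono
      · filter_upwards [frechet3_ae_mem hμ] with d hd
        have hs : ∑ i ∈ S, d i ≤ 3 * D := by
          have h1 : ∑ i ∈ S, d i ≤ ∑ i : Fin 3, d i :=
            Finset.sum_le_sum_of_subset_of_nonneg (Finset.subset_univ S)
              (fun i _ _ => (hd i).1.le)
          have h2 : ∑ i : Fin 3, d i = d 0 + d 1 + d 2 := Fin.sum_univ_three d
          have := (hd 0).2; have := (hd 1).2; have := (hd 2).2
          linarith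
        have : γ - 3 * D ≤ γ - ∑ i ∈ S, d i := by linarith
        exact this.trans (le_max_left _ _)
    nlinarith

lemma vP3_denom {p c D : ℝ} (hc : 0 < c) (hcp : c < p) (hD : 0 < D)
    {μ : Measure (Fin 3 → ℝ)} (hμ : μ ∈ frechet3 D) :
    vP3 p c μ (D * (2 * p - c) / p) Finset.univ = D * (p - c) * (3 * p - c) / (2 * p) := by
  have hp : 0 < p := hc.trans hcp
  have ha : 0 < D * (p - c) / p := div_pos (mul_pos hD (by linarith)) hp
  have haD : D * (p - c) / p < D := by
    rw [div_lt_iff₀ hp]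
    nlinarith
  have hy : D * (2 * p - c) / p = D + D * (p - c) / p := by field_simp; ring
  have hcongr : ∫ d, max (D * (2 * p - c) / p - ∑ i ∈ Finset.univ, d i) 0 ∂μ
      = ∫ d, max (D * (p - c) / p - d 2) 0 ∂μ := by
    apply integral_congr_ae
    filter_upwards [frechet3_ae_sum hμ] with d hd
    rw [Fin.sum_univ_three, hy, hd]
    ring_nf
  have hmap : ∫ d, max (D * (p - c) / p - d 2) 0 ∂μ
      = ∫ t, max (D * (p - c) / p - t) 0 ∂(unif D) := by
    rw [← hμ.2.2]
    exact (integral_map (φ := fun d : Fin 3 → ℝ => d 2) (f := fun t => max (D * (p - c) / p - t) 0)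
      (measurable_pi_apply 2).aemeasurable
      (((continuous_const.sub continuous_id').max continuous_const).aestronglyMeasurable)).symm
  unfold vP3
  rw [hcongr, hmap, unif_integral_max hD ha haD, hy]
  field_simp
  ring

lemma sup_det {p c D : ℝ} (hc : 0 < c) (hcp : c < p) (hD : 0 < D)
    {μ : Measure (Fin 3 → ℝ)} [IsProbabilityMeasure μ] {S : Finset (Fin 3)}
    (hs : ∀ᵐ d ∂μ, ∑ i ∈ S, d i = D) :
    (⨆ γ : {γ : ℝ // 0 ≤ γ}, vP3 p c μ γ.1 S) = D * (p - c) := by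
  have hval : ∀ γ : ℝ, vP3 p c μ γ S = (p - c) * γ - p * max (γ - D) 0 := by
    intro γ
    unfold vP3
    congr 1
    have : ∫ d, max (γ - ∑ i ∈ S, d i) 0 ∂μ = ∫ _d : Fin 3 → ℝ, max (γ - D) 0 ∂μ := by
      apply integral_congr_ae
      filter_upwards [hs] with d hd
      rw [hd]
    rw [this, integral_const]
    simp
  have hub : ∀ γ : {γ : ℝ // 0 ≤ γ}, vP3 p c μ γ.1 S ≤ D * (p - c) := by
    rintro ⟨γ, hγ⟩
    rw [hval]
    rcases le_total γ D with h | h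
    · rw [max_eq_right (by linarith)]
      nlinarith
    · rw [max_eq_left (by linarith)]
      nlinarith
  refine le_antisymm (ciSup_le hub) ?_
  have hv : vP3 p c μ D S = D * (p - c) := by
    rw [hval]; simp; ring
  calc D * (p - c) = vP3 p c μ ((⟨D, hD.le⟩ : {γ : ℝ // 0 ≤ γ}) : ℝ) S := hv.symm
    _ ≤ ⨆ γ : {γ : ℝ // 0 ≤ γ}, vP3 p c μ γ.1 S :=
        le_ciSup (f := fun γ : {γ : ℝ // 0 ≤ γ} => vP3 p c μ γ.1 S)
          ⟨D * (p - c), by rintro x ⟨γ, rfl⟩; exact hub γ⟩ ⟨D, hD.le⟩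

noncomputable def muA (D : ℝ) : Measure (Fin 3 → ℝ) :=
  (unif D).map (fun t => ![t, D - t, t])

noncomputable def muB (D : ℝ) : Measure (Fin 3 → ℝ) :=
  (unif D).map (fun t => ![t, D - t, D - t])

lemma measA {D : ℝ} : Measurable (fun t : ℝ => ![t, D - t, t]) := by
  refine measurable_pi_iff.mpr fun i => ?_
  fin_cases i <;> simp <;> fun_prop

lemma measB {D : ℝ} : Measurable (fun t : ℝ => ![t, D - t, D - t]) := by
  refine measurable_pi_iff.mpr fun i => ?_
  fin_cases i <;> simp <;> fun_prop

lemma unif_reflect {D : ℝ} : (unif D).map (fun t => D - t) = unif D := by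
  have hf : Measurable fun t : ℝ => D - t := by fun_prop
  unfold unif
  rw [Measure.map_smul]
  congr 1
  have hpre : (fun t : ℝ => D - t) ⁻¹' (Set.Ioo 0 D) = Set.Ioo 0 D := by
    ext t
    simp only [Set.mem_preimage, Set.mem_Ioo]
    constructor <;> rintro ⟨h1, h2⟩ <;> constructor <;> linarith
  calc (volume.restrict (Set.Ioo 0 D)).map (fun t => D - t)
      = (volume.restrict ((fun t : ℝ => D - t) ⁻¹' (Set.Ioo 0 D))).map (fun t => D - t) := by
        rw [hpre]
    _ = (volume.map (fun t : ℝ => D - t)).restrict (Set.Ioo 0 D) :=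
        (Measure.restrict_map hf measurableSet_Ioo).symm
    _ = volume.restrict (Set.Ioo 0 D) := by rw [Measure.map_sub_left_eq_self volume D]

lemma muA_mem {D : ℝ} (hD : 0 < D) : muA D ∈ frechet3 D := by
  haveI := unif_prob hD
  refine ⟨Measure.isProbabilityMeasure_map measA.aemeasurable, ?_, ?_⟩
  · rw [muA, Measure.map_map meas_pair measA]
    congr 1
  · rw [muA, Measure.map_map (measurable_pi_apply 2) measA]
    have : (fun d : Fin 3 → ℝ => d 2) ∘ (fun t : ℝ => ![t, D - t, t]) = id := by
      funext t; simp
    rw [this, Measure.map_id]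

lemma muB_mem {D : ℝ} (hD : 0 < D) : muB D ∈ frechet3 D := by
  haveI := unif_prob hD
  refine ⟨Measure.isProbabilityMeasure_map measB.aemeasurable, ?_, ?_⟩
  · rw [muB, Measure.map_map meas_pair measB]
    congr 1
  · rw [muB, Measure.map_map (measurable_pi_apply 2) measB]
    have : (fun d : Fin 3 → ℝ => d 2) ∘ (fun t : ℝ => ![t, D - t, D - t])
        = fun t : ℝ => D - t := by funext t; simp
    rw [this, unif_reflect]

lemma meas_sumset {D : ℝ} (S : Finset (Fin 3)) :
    MeasurableSet {d : Fin 3 → ℝ | ∑ i ∈ S, d i = D} :=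
  (Finset.measurable_sum S fun i _ => measurable_pi_apply i) (measurableSet_singleton D)

lemma muA_ae_sum12 {D : ℝ} : ∀ᵐ d ∂(muA D), ∑ i ∈ ({1, 2} : Finset (Fin 3)), d i = D := by
  rw [muA, MeasureTheory.ae_map_iff measA.aemeasurable (meas_sumset _)]
  refine MeasureTheory.ae_of_all _ fun t => ?_
  rw [Finset.sum_pair (show (1 : Fin 3) ≠ 2 by decide)]
  simp

lemma muB_ae_sum02 {D : ℝ} : ∀ᵐ d ∂(muB D), ∑ i ∈ ({0, 2} : Finset (Fin 3)), d i = D := by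
  rw [muB, MeasureTheory.ae_map_iff measB.aemeasurable (meas_sumset _)]
  refine MeasureTheory.ae_of_all _ fun t => ?_
  rw [Finset.sum_pair (show (0 : Fin 3) ≠ 2 by decide)]
  simp

lemma frechet3_ae_sum01 {D : ℝ} {μ : Measure (Fin 3 → ℝ)} (hμ : μ ∈ frechet3 D) :
    ∀ᵐ d ∂μ, ∑ i ∈ ({0, 1} : Finset (Fin 3)), d i = D := by
  filter_upwards [frechet3_ae_sum hμ] with d hd
  rw [Finset.sum_pair (show (0 : Fin 3) ≠ 1 by decide)]
  exact hd


/-- A three–player robust newsvendor game with empty core: at `y = y*_wc(N) = D(2p-c)/p`,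
`v_max(y,{1,2}) = 2p/(3p-c)`, `v_max(y,{1,3}), v_max(y,{2,3}) ≥ 2p/(3p-c)`, and
`6p/(3p-c) > 2`, so no efficient `z` can satisfy all two-player coalition constraints. -/
theorem stmt_14 (p c D : ℝ) (hc : 0 < c) (hcp : c < p) (hD : 0 < D) :
    vmax3 p c D (D * (2 * p - c) / p) {0, 1} = 2 * p / (3 * p - c) ∧
    2 * p / (3 * p - c) ≤ vmax3 p c D (D * (2 * p - c) / p) {0, 2} ∧
    2 * p / (3 * p - c) ≤ vmax3 p c D (D * (2 * p - c) / p) {1, 2} ∧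
    2 < 6 * p / (3 * p - c) ∧
    ¬ ∃ z : Fin 3 → ℝ, (∑ i, z i) = 1 ∧
        ∀ S : Finset (Fin 3), S.card = 2 →
          vmax3 p c D (D * (2 * p - c) / p) S ≤ ∑ i ∈ S, z i := by
  have hp : 0 < p := hc.trans hcp
  have h3pc : 0 < 3 * p - c := by linarith
  have hKpos : 0 < D * (p - c) * (3 * p - c) / (2 * p) := by
    apply div_pos
    · apply mul_pos (mul_pos hD (by linarith)) h3pc
    · linarith
  haveI hne : Nonempty ↥(frechet3 D) := ⟨⟨muA D, muA_mem hD⟩⟩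
  haveI : Nonempty {γ : ℝ // 0 ≤ γ} := ⟨⟨0, le_rfl⟩⟩
  have hpc : p - c ≠ 0 := by linarith
  have hratio : D * (p - c) / (D * (p - c) * (3 * p - c) / (2 * p)) = 2 * p / (3 * p - c) := by
    rw [div_div_eq_mul_div, div_eq_div_iff
      (mul_pos (mul_pos hD (by linarith : (0:ℝ) < p - c)) h3pc).ne' h3pc.ne']
    ring
  -- boundedness of the outer supremum
  have hbdd : ∀ S : Finset (Fin 3), BddAbove (Set.range fun μ : frechet3 D =>
      (⨆ γ : {γ : ℝ // 0 ≤ γ}, vP3 p c μ.1 γ.1 S) / vP3 p c μ.1 (D * (2 * p - c) / p)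
        Finset.univ) := by
    intro S
    refine ⟨3 * D * (p - c) / (D * (p - c) * (3 * p - c) / (2 * p)), ?_⟩
    rintro x ⟨μ, rfl⟩
    dsimp only
    rw [vP3_denom hc hcp hD μ.2]
    gcongr
    exact ciSup_le fun γ => vP3_bound hc hcp hD μ.2 γ.2 S
  -- the ratio for coalition {0,1} is the same for every μ in the class
  have hval : ∀ μ : frechet3 D,
      (⨆ γ : {γ : ℝ // 0 ≤ γ}, vP3 p c μ.1 γ.1 ({0, 1} : Finset (Fin 3))) /
        vP3 p c μ.1 (D * (2 * p - c) / p) Finset.univ = 2 * p / (3 * p - c) := by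
    intro μ
    haveI := μ.2.1
    rw [sup_det hc hcp hD (frechet3_ae_sum01 μ.2), vP3_denom hc hcp hD μ.2, hratio]
  have h1 : vmax3 p c D (D * (2 * p - c) / p) {0, 1} = 2 * p / (3 * p - c) := by
    refine le_antisymm (ciSup_le fun μ => (hval μ).le) ?_
    rw [← hval ⟨muA D, muA_mem hD⟩]
    exact le_ciSup (hbdd {0, 1}) ⟨muA D, muA_mem hD⟩
  have h2 : 2 * p / (3 * p - c) ≤ vmax3 p c D (D * (2 * p - c) / p) {0, 2} := by
    have hvB : (⨆ γ : {γ : ℝ // 0 ≤ γ}, vP3 p c (muB D) γ.1 ({0, 2} : Finset (Fin 3))) /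
        vP3 p c (muB D) (D * (2 * p - c) / p) Finset.univ = 2 * p / (3 * p - c) := by
      haveI := (muB_mem hD).1
      rw [sup_det hc hcp hD muB_ae_sum02, vP3_denom hc hcp hD (muB_mem hD), hratio]
    rw [← hvB]
    exact le_ciSup (hbdd {0, 2}) ⟨muB D, muB_mem hD⟩
  have h3 : 2 * p / (3 * p - c) ≤ vmax3 p c D (D * (2 * p - c) / p) {1, 2} := by
    have hvA : (⨆ γ : {γ : ℝ // 0 ≤ γ}, vP3 p c (muA D) γ.1 ({1, 2} : Finset (Fin 3))) /
        vP3 p c (muA D) (D * (2 * p - c) / p) Finset.univ = 2 * p / (3 * p - c) := by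
      haveI := (muA_mem hD).1
      rw [sup_det hc hcp hD muA_ae_sum12, vP3_denom hc hcp hD (muA_mem hD), hratio]
    rw [← hvA]
    exact le_ciSup (hbdd {1, 2}) ⟨muA D, muA_mem hD⟩
  have h4 : 2 < 6 * p / (3 * p - c) := by
    rw [lt_div_iff₀ h3pc]
    linarith
  refine ⟨h1, h2, h3, h4, ?_⟩
  rintro ⟨z, hz, hcons⟩
  have c01 := hcons {0, 1} (by decide)
  have c02 := hcons {0, 2} (by decide)
  have c12 := hcons {1, 2} (by decide)
  rw [h1] at c01
  rw [Finset.sum_pair (show (0 : Fin 3) ≠ 1 by decide)] at c01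
  rw [Finset.sum_pair (show (0 : Fin 3) ≠ 2 by decide)] at c02
  rw [Finset.sum_pair (show (1 : Fin 3) ≠ 2 by decide)] at c12
  have hc02 := h2.trans c02
  have hc12 := h3.trans c12
  rw [Fin.sum_univ_three] at hz
  have h6 : 6 * p / (3 * p - c) = 3 * (2 * p / (3 * p - c)) := by ring
  rw [h6] at h4
  linarith
end

section
/- For the bilinear program defining v_max(y,S) under discrete demand distributions, there exists an optimal solution (γ*, θ*, ψ*) with γ* ∈ {d_1(S),...,d_K(S)}; i.e., the optimal stand-alone order quantity for the breakaway coalition can be taken to be one of the finitely many realized demand values. -/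
open Finset

private lemma sum_max_eq' {κ : Type*} [Fintype κ] (dS q : κ → ℝ) (x : ℝ) (T : Finset κ)
    (h1 : ∀ j ∈ T, dS j ≤ x) (h2 : ∀ j ∉ T, x ≤ dS j) :
    ∑ j, max (x - dS j) 0 * q j = ∑ j ∈ T, (x - dS j) * q j := by
  rw [← Finset.sum_subset T.subset_univ (fun j _ hj => by
    rw [max_eq_right (sub_nonpos.mpr (h2 j hj)), zero_mul])]
  exact Finset.sum_congr rfl fun j hj => by
    rw [max_eq_left (sub_nonneg.mpr (h1 j hj))]

private lemma key' {κ : Type*} [Fintype κ] [Nonempty κ] (p c : ℝ) (hc : 0 < c) (hcp : c < p)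
    (dS : κ → ℝ) (q : κ → ℝ) (hq0 : ∀ j, 0 ≤ q j) (hq1 : ∑ j, q j = 1) (γ : ℝ) :
    ∃ k, (p - c) * γ - p * ∑ j, max (γ - dS j) 0 * q j ≤
      (p - c) * dS k - p * ∑ j, max (dS k - dS j) 0 * q j := by
  classical
  set T : Finset κ := Finset.univ.filter (fun j => dS j ≤ γ) with hT
  have hTmem : ∀ j, j ∈ T ↔ dS j ≤ γ := fun j => by simp [hT]
  have hsub : ∀ x : ℝ, ∑ j ∈ T, (x - dS j) * q j
      = x * (∑ j ∈ T, q j) - ∑ j ∈ T, dS j * q j := by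
    intro x
    rw [Finset.mul_sum, ← Finset.sum_sub_distrib]
    exact Finset.sum_congr rfl fun j _ => by ring
  by_cases hA : (p - c) - p * ∑ j ∈ T, q j ≤ 0
  · have hTne : T.Nonempty := by
      by_contra h
      rw [Finset.not_nonempty_iff_eq_empty] at h
      rw [h, Finset.sum_empty, mul_zero, sub_zero] at hA
      linarith
    obtain ⟨k, hkT, hkmax⟩ := T.exists_max_image dS hTne
    refine ⟨k, ?_⟩
    have e1 := sum_max_eq' dS q γ T (fun j hj => (hTmem j).mp hj)
      (fun j hj => le_of_lt (lt_of_not_ge (fun h => hj ((hTmem j).mpr h))))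
    have e2 := sum_max_eq' dS q (dS k) T (fun j hj => hkmax j hj)
      (fun j hj => le_trans ((hTmem k).mp hkT)
        (le_of_lt (lt_of_not_ge fun h => hj ((hTmem j).mpr h))))
    rw [e1, e2, hsub, hsub]
    have hk : dS k ≤ γ := (hTmem k).mp hkT
    nlinarith [mul_nonneg (sub_nonneg.mpr hk) (neg_nonneg.mpr hA)]
  · push_neg at hA
    have hTcne : Tᶜ.Nonempty := by
      by_contra h
      rw [Finset.not_nonempty_iff_eq_empty, Finset.compl_eq_empty_iff] at h
      rw [h] at hA
      rw [hq1] at hA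
      linarith
    obtain ⟨k, hkT, hkmin⟩ := Tᶜ.exists_min_image dS hTcne
    have hknT : k ∉ T := Finset.mem_compl.mp hkT
    have hγk : γ < dS k := lt_of_not_ge fun h => hknT ((hTmem k).mpr h)
    refine ⟨k, ?_⟩
    have e1 := sum_max_eq' dS q γ T (fun j hj => (hTmem j).mp hj)
      (fun j hj => le_of_lt (lt_of_not_ge fun h => hj ((hTmem j).mpr h)))
    have e2 := sum_max_eq' dS q (dS k) T
      (fun j hj => le_trans ((hTmem j).mp hj) hγk.le)
      (fun j hj => hkmin j (Finset.mem_compl.mpr hj))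
    rw [e1, e2, hsub, hsub]
    nlinarith [mul_nonneg (sub_nonneg.mpr hγk.le) (le_of_lt hA)]

/-- For the bilinear program defining `v_max(y,S)` under discrete demand distributions,
there exists an optimal solution whose stand-alone order quantity `γ*` is one of the
finitely many realized coalition demand values `d_k(S)`. -/
theorem stmt_16 {κ : Type*} [Fintype κ] [Nonempty κ]
    (p c : ℝ) (hc : 0 < c) (hcp : c < p)
    (dS dN : κ → ℝ) (hdS : ∀ k, 0 ≤ dS k) (hdN : ∀ k, 0 ≤ dN k)
    (Q : Set (κ → ℝ)) (hQne : Q.Nonempty) (hQc : IsCompact Q)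
    (hprob : ∀ q ∈ Q, (∀ k, 0 ≤ q k) ∧ ∑ k, q k = 1)
    (y : ℝ) (hy : ∀ q ∈ Q, 0 < (p - c) * y - p * ∑ k, max (y - dN k) 0 * q k) :
    ∃ k : κ, ∃ q ∈ Q,
      ((p - c) * dS k - p * ∑ j, max (dS k - dS j) 0 * q j) /
          ((p - c) * y - p * ∑ j, max (y - dN j) 0 * q j) =
        ⨆ γ : {γ : ℝ // 0 ≤ γ}, ⨆ q' : Q,
          ((p - c) * γ.1 - p * ∑ j, max (γ.1 - dS j) 0 * q'.1 j) /
            ((p - c) * y - p * ∑ j, max (y - dN j) 0 * q'.1 j) := by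
  classical
  haveI : Nonempty Q := hQne.to_subtype
  set D : (κ → ℝ) → ℝ := fun q => (p - c) * y - p * ∑ j, max (y - dN j) 0 * q j with hD
  set g : κ → (κ → ℝ) → ℝ := fun k q =>
    ((p - c) * dS k - p * ∑ j, max (dS k - dS j) 0 * q j) / D q with hg
  have cD : Continuous D := by
    apply continuous_const.sub
    exact continuous_const.mul
      (continuous_finset_sum _ fun j _ => continuous_const.mul (continuous_apply j))
  have cg : ∀ k, ContinuousOn (g k) Q := by
    intro k
    apply ContinuousOn.div
    · exact (continuous_const.sub (continuous_const.mul
        (continuous_finset_sum _ fun j _ =>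
          continuous_const.mul (continuous_apply j)))).continuousOn
    · exact cD.continuousOn
    · exact fun q hq => ne_of_gt (hy q hq)
  choose qm hqmQ hqmMax using fun k => hQc.exists_isMaxOn hQne (cg k)
  obtain ⟨k0, hk0⟩ := Finite.exists_max (fun k => g k (qm k))
  set v : ℝ := g k0 (qm k0) with hv
  -- every feasible value is ≤ v
  have hub : ∀ (γ : ℝ), 0 ≤ γ → ∀ q' ∈ Q,
      ((p - c) * γ - p * ∑ j, max (γ - dS j) 0 * q' j) / D q' ≤ v := by
    intro γ hγ q' hq'
    obtain ⟨hq0, hq1⟩ := hprob q' hq'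
    obtain ⟨k, hk⟩ := key' p c hc hcp dS q' hq0 hq1 γ
    calc ((p - c) * γ - p * ∑ j, max (γ - dS j) 0 * q' j) / D q'
        ≤ g k q' := by
          exact (div_le_div_iff_of_pos_right (show (0:ℝ) < D q' from hy q' hq')).mpr hk
      _ ≤ g k (qm k) := hqmMax k hq'
      _ ≤ v := hk0 k
  refine ⟨k0, qm k0, hqmQ k0, ?_⟩
  apply le_antisymm
  · -- v ≤ sup
    have hbdd1 : BddAbove (Set.range fun q' : Q =>
        ((p - c) * dS k0 - p * ∑ j, max (dS k0 - dS j) 0 * q'.1 j) / D q'.1) := by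
      refine ⟨v, ?_⟩
      rintro x ⟨q', rfl⟩
      exact hub (dS k0) (hdS k0) q'.1 q'.2
    have hbdd2 : BddAbove (Set.range fun γ : {γ : ℝ // 0 ≤ γ} => ⨆ q' : Q,
        ((p - c) * γ.1 - p * ∑ j, max (γ.1 - dS j) 0 * q'.1 j) / D q'.1) := by
      refine ⟨v, ?_⟩
      rintro x ⟨γ, rfl⟩
      exact ciSup_le fun q' => hub γ.1 γ.2 q'.1 q'.2
    calc v = g k0 (qm k0) := rfl
      _ ≤ ⨆ q' : Q, ((p - c) * dS k0 - p * ∑ j, max (dS k0 - dS j) 0 * q'.1 j) / D q'.1 :=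
          le_ciSup hbdd1 (⟨qm k0, hqmQ k0⟩ : Q)
      _ ≤ _ := le_ciSup hbdd2 (⟨dS k0, hdS k0⟩ : {γ : ℝ // 0 ≤ γ})
  · exact ciSup_le fun γ => ciSup_le fun q' => hub γ.1 γ.2 q'.1 q'.2
end

section
/- For each coalition S ⊊ N in the discrete robust newsvendor game, the worst-case normalized value v_max(y,S) is a convex function of y on Y(N). -/
private lemma pos_comb {a b u v : ℝ} (ha : 0 ≤ a) (hb : 0 ≤ b) (hab : a + b = 1)
    (hu : 0 < u) (hv : 0 < v) : 0 < a * u + b * v := by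
  rcases ha.eq_or_lt with h | h
  · have hb1 : b = 1 := by linarith
    rw [← h, hb1]; simpa using hv
  · have h1 := mul_pos h hu
    have h2 := mul_nonneg hb hv.le
    linarith

private lemma key_div (N u v a b : ℝ) (hN : 0 ≤ N) (hu : 0 < u) (hv : 0 < v)
    (ha : 0 ≤ a) (hb : 0 ≤ b) (hab : a + b = 1) :
    N / (a * u + b * v) ≤ a * (N / u) + b * (N / v) := by
  have hS : 0 < a * u + b * v := pos_comb ha hb hab hu hv
  have hrw : a * (N / u) + b * (N / v) = (a * v + b * u) * N / (u * v) := by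
    field_simp
  rw [hrw, div_le_div_iff₀ hS (mul_pos hu hv)]
  have hid : (a * v + b * u) * N * (a * u + b * v) =
      N * (u * v) + N * (a * b) * (u - v) ^ 2 := by
    linear_combination (N * u * v * (a + b + 1)) * hab
  have hnn : 0 ≤ N * (a * b) * (u - v) ^ 2 :=
    mul_nonneg (mul_nonneg hN (mul_nonneg ha hb)) (sq_nonneg _)
  linarith

/-- Abstract convexity lemma: the sup over finitely many `k` and a compact set `Q`
of `num k q / den y q`, where `den` is concave and positive in `y`, the numerators
and denominators are continuous in `q`, and some `k` has nonnegative numerator for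
all `q ∈ Q`, is convex in `y`. -/
private lemma aux_convex {κ : Type*} [Fintype κ] [Nonempty κ]
    (Q : Set (κ → ℝ)) (hQne : Q.Nonempty) (hQc : IsCompact Q)
    (num : κ → (κ → ℝ) → ℝ) (den : ℝ → (κ → ℝ) → ℝ)
    (S : Set ℝ) (hSconv : Convex ℝ S)
    (hden_pos : ∀ y ∈ S, ∀ q ∈ Q, 0 < den y q)
    (hconc : ∀ q ∈ Q, ∀ x y a b : ℝ, 0 ≤ a → 0 ≤ b → a + b = 1 →
      a * den x q + b * den y q ≤ den (a * x + b * y) q)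
    (hnum_cont : ∀ k, Continuous (num k)) (hden_cont : ∀ y, Continuous (den y))
    (hexists : ∃ k, ∀ q ∈ Q, 0 ≤ num k q) :
    ConvexOn ℝ S (fun y => ⨆ k, ⨆ q : Q, num k q.1 / den y q.1) := by
  haveI : Nonempty Q := hQne.to_subtype
  haveI : CompactSpace Q := isCompact_iff_compactSpace.mp hQc
  have hbddQ : ∀ w ∈ S, ∀ k, BddAbove (Set.range fun q : Q => num k q.1 / den w q.1) := by
    intro w hw k
    have hF : Continuous fun q : Q => num k q.1 / den w q.1 :=
      ((hnum_cont k).comp continuous_subtype_val).div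
        ((hden_cont w).comp continuous_subtype_val)
        (fun q => (hden_pos w hw q.1 q.2).ne')
    exact (isCompact_range hF).bddAbove
  have hbddK : ∀ w ∈ S, BddAbove (Set.range fun k : κ => ⨆ q : Q, num k q.1 / den w q.1) :=
    fun w _ => (Set.finite_range _).bddAbove
  have hle_g : ∀ w ∈ S, ∀ k, ∀ q : Q,
      num k q.1 / den w q.1 ≤ ⨆ k, ⨆ q : Q, num k q.1 / den w q.1 :=
    fun w hw k q => (le_ciSup (hbddQ w hw k) q).trans (le_ciSup (hbddK w hw) k)
  have hg_nonneg : ∀ w ∈ S, 0 ≤ ⨆ k, ⨆ q : Q, num k q.1 / den w q.1 := by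
    intro w hw
    obtain ⟨k0, hk0⟩ := hexists
    obtain ⟨q0, hq0⟩ := hQne
    refine le_trans ?_ (hle_g w hw k0 ⟨q0, hq0⟩)
    exact div_nonneg (hk0 q0 hq0) (hden_pos w hw q0 hq0).le
  refine ⟨hSconv, ?_⟩
  intro x hx y hy a b ha hb hab
  simp only [smul_eq_mul]
  have hz : a * x + b * y ∈ S := by
    have := hSconv hx hy ha hb hab
    simpa [smul_eq_mul] using this
  refine ciSup_le fun k => ciSup_le fun q => ?_
  have hdx := hden_pos x hx q.1 q.2
  have hdy := hden_pos y hy q.1 q.2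
  have hdz : a * den x q.1 + b * den y q.1 ≤ den (a * x + b * y) q.1 :=
    hconc q.1 q.2 x y a b ha hb hab
  have hS0 : 0 < a * den x q.1 + b * den y q.1 := pos_comb ha hb hab hdx hdy
  have hdz0 : 0 < den (a * x + b * y) q.1 := hS0.trans_le hdz
  rcases le_or_gt 0 (num k q.1) with hn | hn
  · have step1 : num k q.1 / den (a * x + b * y) q.1 ≤
        num k q.1 / (a * den x q.1 + b * den y q.1) := by gcongr
    have step2 := key_div (num k q.1) (den x q.1) (den y q.1) a b hn hdx hdy ha hb hab
    have step3 : a * (num k q.1 / den x q.1) + b * (num k q.1 / den y q.1) ≤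
        a * (⨆ k, ⨆ q : Q, num k q.1 / den x q.1) +
        b * (⨆ k, ⨆ q : Q, num k q.1 / den y q.1) :=
      add_le_add (mul_le_mul_of_nonneg_left (hle_g x hx k q) ha)
        (mul_le_mul_of_nonneg_left (hle_g y hy k q) hb)
    linarith
  · have h1 : num k q.1 / den (a * x + b * y) q.1 ≤ 0 :=
      div_nonpos_iff.mpr (Or.inr ⟨hn.le, hdz0.le⟩)
    have h2 : 0 ≤ a * (⨆ k, ⨆ q : Q, num k q.1 / den x q.1) +
        b * (⨆ k, ⨆ q : Q, num k q.1 / den y q.1) :=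
      add_nonneg (mul_nonneg ha (hg_nonneg x hx)) (mul_nonneg hb (hg_nonneg y hy))
    linarith

/-- In the discrete robust newsvendor game, for each coalition `S ⊊ N` the worst-case
normalized value
`v_max(y,S) = max_{γ ∈ {d_1(S),...,d_K(S)}} max_{q ∈ Q} num(γ,q) / den(y,q)`
is a convex function of `y` on `Y(N) = {y ≥ 0 : den(y,q) > 0 ∀ q ∈ Q}`. -/
theorem stmt_18 {κ : Type*} [Fintype κ] [Nonempty κ]
    (p c : ℝ) (hc : 0 < c) (hcp : c < p)
    (dS dN : κ → ℝ) (hdS : ∀ k, 0 ≤ dS k) (hdN : ∀ k, 0 ≤ dN k)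
    (Q : Set (κ → ℝ)) (hQne : Q.Nonempty) (hQc : IsCompact Q) (hQconv : Convex ℝ Q)
    (hprob : ∀ q ∈ Q, (∀ k, 0 ≤ q k) ∧ ∑ k, q k = 1) :
    ConvexOn ℝ
      {y : ℝ | 0 ≤ y ∧ ∀ q ∈ Q, 0 < (p - c) * y - p * ∑ j, max (y - dN j) 0 * q j}
      (fun y : ℝ => ⨆ k : κ, ⨆ q : Q,
        ((p - c) * dS k - p * ∑ j, max (dS k - dS j) 0 * q.1 j) /
          ((p - c) * y - p * ∑ j, max (y - dN j) 0 * q.1 j)) := by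
  have hp : 0 < p := hc.trans hcp
  set num : κ → (κ → ℝ) → ℝ :=
    fun k q => (p - c) * dS k - p * ∑ j, max (dS k - dS j) 0 * q j with hnum_def
  set den : ℝ → (κ → ℝ) → ℝ :=
    fun y q => (p - c) * y - p * ∑ j, max (y - dN j) 0 * q j with hden_def
  -- concavity of `den` in `y`
  have hconc : ∀ q ∈ Q, ∀ x y a b : ℝ, 0 ≤ a → 0 ≤ b → a + b = 1 →
      a * den x q + b * den y q ≤ den (a * x + b * y) q := by
    intro q hq x y a b ha hb hab
    have hqn := (hprob q hq).1
    have hsum : ∑ j, max (a * x + b * y - dN j) 0 * q j ≤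
        a * ∑ j, max (x - dN j) 0 * q j + b * ∑ j, max (y - dN j) 0 * q j := by
      rw [Finset.mul_sum, Finset.mul_sum, ← Finset.sum_add_distrib]
      refine Finset.sum_le_sum fun j _ => ?_
      have h1 : max (a * x + b * y - dN j) 0 ≤
          a * max (x - dN j) 0 + b * max (y - dN j) 0 := by
        apply max_le
        · have e1 := mul_le_mul_of_nonneg_left (le_max_left (x - dN j) 0) ha
          have e2 := mul_le_mul_of_nonneg_left (le_max_left (y - dN j) 0) hb
          have e3 : a * dN j + b * dN j = dN j := by rw [← add_mul, hab, one_mul]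
          nlinarith [e1, e2, e3]
        · exact add_nonneg (mul_nonneg ha (le_max_right _ _))
            (mul_nonneg hb (le_max_right _ _))
      refine le_trans (mul_le_mul_of_nonneg_right h1 (hqn j)) (le_of_eq ?_)
      ring
    have h2 := mul_le_mul_of_nonneg_left hsum hp.le
    simp only [hden_def]
    nlinarith [h2]
  -- the domain set and its convexity
  have hSconv : Convex ℝ
      {y : ℝ | 0 ≤ y ∧ ∀ q ∈ Q, 0 < (p - c) * y - p * ∑ j, max (y - dN j) 0 * q j} := by
    intro x hx y hy a b ha hb hab
    simp only [Set.mem_setOf_eq, smul_eq_mul]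
    refine ⟨add_nonneg (mul_nonneg ha hx.1) (mul_nonneg hb hy.1), fun q hq => ?_⟩
    have h := hconc q hq x y a b ha hb hab
    have hdx : 0 < den x q := hx.2 q hq
    have hdy : 0 < den y q := hy.2 q hq
    have := pos_comb ha hb hab hdx hdy
    show 0 < den (a * x + b * y) q
    linarith
  have hnum_cont : ∀ k, Continuous (num k) := by
    intro k
    exact continuous_const.sub (continuous_const.mul
      (continuous_finset_sum _ fun j _ => continuous_const.mul (continuous_apply j)))
  have hden_cont : ∀ y, Continuous (den y) := by
    intro y
    exact continuous_const.sub (continuous_const.mul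
      (continuous_finset_sum _ fun j _ => continuous_const.mul (continuous_apply j)))
  have hexists : ∃ k, ∀ q ∈ Q, 0 ≤ num k q := by
    obtain ⟨k0, -, hk0⟩ := Finset.exists_min_image Finset.univ dS Finset.univ_nonempty
    refine ⟨k0, fun q hq => ?_⟩
    have hz : ∑ j, max (dS k0 - dS j) 0 * q j = 0 := by
      refine Finset.sum_eq_zero fun j _ => ?_
      rw [max_eq_right (by linarith [hk0 j (Finset.mem_univ j)] : dS k0 - dS j ≤ 0),
        zero_mul]
    simp only [hnum_def, hz, mul_zero, sub_zero]
    exact mul_nonneg (by linarith) (hdS k0)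
  exact aux_convex Q hQne hQc num den _ hSconv (fun y hy q hq => hy.2 q hq)
    hconc hnum_cont hden_cont hexists
end

section
/- The least-core value function σ(y) = min{ε : Σ_{i∈S} x_i ≥ v_max(y,S) − ε for all S ⊊ N, Σ_{i∈N} x_i = 1} is a convex function of y on Y(N). -/
/-- The least-core value function
`σ(y) = min {ε : ∃ x, ∑_i x_i = 1 ∧ ∀ S ⊊ N, ∑_{i ∈ S} x_i ≥ v_max(y,S) - ε}`
is convex in `y` on `Y(N)`, provided each `v_max(·,S)` is convex on the convex set `Y(N)`. -/
theorem stmt_19 {ι : Type*} [Fintype ι] [Nonempty ι]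
    (Y : Set ℝ) (hY : Convex ℝ Y)
    (w : Finset ι → ℝ → ℝ)
    (hconv : ∀ S : Finset ι, S.Nonempty → S ⊂ Finset.univ → ConvexOn ℝ Y (w S)) :
    ConvexOn ℝ Y (fun y : ℝ =>
      sInf {ε : ℝ | ∃ x : ι → ℝ, (∑ i, x i) = 1 ∧
        ∀ S : Finset ι, S.Nonempty → S ⊂ Finset.univ → w S y - ε ≤ ∑ i ∈ S, x i}) := by
  classical
  set A : ℝ → Set ℝ := fun y => {ε : ℝ | ∃ x : ι → ℝ, (∑ i, x i) = 1 ∧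
      ∀ S : Finset ι, S.Nonempty → S ⊂ Finset.univ → w S y - ε ≤ ∑ i ∈ S, x i} with hA
  obtain ⟨i₀⟩ := (inferInstance : Nonempty ι)
  by_cases hcard : Fintype.card ι = 1
  · -- no nonempty proper subsets at all; the set is all of ℝ
    have hno : ∀ S : Finset ι, S.Nonempty → ¬ (S ⊂ Finset.univ) := by
      intro S hS hsub
      have h1 : S.card < Fintype.card ι := by
        simpa [Finset.card_univ] using Finset.card_lt_card hsub
      have h2 : 1 ≤ S.card := Finset.card_pos.mpr hS
      omega
    have hAy : ∀ y, A y = Set.univ := by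
      intro y
      ext ε
      simp only [hA, Set.mem_setOf_eq, Set.mem_univ, iff_true]
      refine ⟨fun i => if i = i₀ then 1 else 0, by simp, ?_⟩
      intro S hS hsub
      exact absurd hsub (hno S hS)
    have heq : (fun y : ℝ => sInf (A y)) = fun _ => sInf (Set.univ : Set ℝ) := by
      funext y; rw [hAy]
    show ConvexOn ℝ Y (fun y => sInf (A y))
    rw [heq]
    exact convexOn_const _ hY
  · -- card ≥ 2
    have hcard2 : 2 ≤ Fintype.card ι := by
      have := Fintype.card_pos (α := ι); omega
    -- nonemptiness of A y
    have hne : ∀ y, (A y).Nonempty := by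
      intro y
      set x : ι → ℝ := fun i => if i = i₀ then 1 else 0 with hx
      have hT : (Finset.univ.powerset (α := ι)).Nonempty :=
        ⟨∅, Finset.mem_powerset.2 (Finset.empty_subset _)⟩
      refine ⟨Finset.univ.powerset.sup' hT (fun S => w S y - ∑ i ∈ S, x i), x, by simp [hx], ?_⟩
      intro S hS hsub
      have : w S y - ∑ i ∈ S, x i ≤
          Finset.univ.powerset.sup' hT (fun S => w S y - ∑ i ∈ S, x i) :=
        Finset.le_sup' (fun S => w S y - ∑ i ∈ S, x i)
          (Finset.mem_powerset.2 (Finset.subset_univ S))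
      linarith
    -- bounded below
    have hbdd : ∀ y, BddBelow (A y) := by
      intro y
      set S₁ : Finset ι := {i₀} with hS₁
      set S₂ : Finset ι := Finset.univ.erase i₀ with hS₂
      have hS₁ne : S₁.Nonempty := ⟨i₀, by simp [hS₁]⟩
      have hS₂ne : S₂.Nonempty := by
        rw [hS₂, ← Finset.card_pos, Finset.card_erase_of_mem (Finset.mem_univ _),
          Finset.card_univ]
        omega
      have hS₁sub : S₁ ⊂ Finset.univ := by
        rw [Finset.ssubset_univ_iff]
        intro h
        have : Fintype.card ι = 1 := by
          rw [← Finset.card_univ, ← h, hS₁, Finset.card_singleton]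
        omega
      have hS₂sub : S₂ ⊂ Finset.univ := by
        rw [Finset.ssubset_univ_iff]
        intro h
        have : i₀ ∈ S₂ := h ▸ Finset.mem_univ i₀
        simp [hS₂] at this
      refine ⟨(w S₁ y + w S₂ y - 1) / 2, ?_⟩
      rintro ε ⟨x, hsum, hcons⟩
      have h1 := hcons S₁ hS₁ne hS₁sub
      have h2 := hcons S₂ hS₂ne hS₂sub
      have hsplit : (∑ i ∈ S₁, x i) + (∑ i ∈ S₂, x i) = 1 := by
        rw [hS₁, hS₂, Finset.sum_singleton, Finset.add_sum_erase _ _ (Finset.mem_univ i₀)]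
        exact hsum
      linarith
    -- main convexity argument
    refine ⟨hY, ?_⟩
    intro y1 hy1 y3 hy3 a b ha hb hab
    have hy2 : a • y1 + b • y3 ∈ Y := hY hy1 hy3 ha hb hab
    show sInf (A (a • y1 + b • y3)) ≤ a • sInf (A y1) + b • sInf (A y3)
    refine le_of_forall_pos_le_add ?_
    intro δ hδ
    obtain ⟨ε1, hε1A, hε1⟩ := Real.lt_sInf_add_pos (hne y1) hδ
    obtain ⟨ε3, hε3A, hε3⟩ := Real.lt_sInf_add_pos (hne y3) hδ
    obtain ⟨x1, hx1sum, hx1⟩ := hε1A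
    obtain ⟨x3, hx3sum, hx3⟩ := hε3A
    have hmem : a * ε1 + b * ε3 ∈ A (a • y1 + b • y3) := by
      refine ⟨fun i => a * x1 i + b * x3 i, ?_, ?_⟩
      · rw [Finset.sum_add_distrib, ← Finset.mul_sum, ← Finset.mul_sum, hx1sum, hx3sum]
        simpa using hab
      · intro S hS hsub
        have hw := (hconv S hS hsub).2 hy1 hy3 ha hb hab
        simp only [smul_eq_mul] at hw
        have hc1 : a * (w S y1 - ε1) ≤ a * (∑ i ∈ S, x1 i) :=
          mul_le_mul_of_nonneg_left (hx1 S hS hsub) ha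
        have hc3 : b * (w S y3 - ε3) ≤ b * (∑ i ∈ S, x3 i) :=
          mul_le_mul_of_nonneg_left (hx3 S hS hsub) hb
        have hsum : ∑ i ∈ S, (a * x1 i + b * x3 i)
            = a * (∑ i ∈ S, x1 i) + b * (∑ i ∈ S, x3 i) := by
          rw [Finset.sum_add_distrib, Finset.mul_sum, Finset.mul_sum]
        rw [hsum]
        simp only [smul_eq_mul]
        nlinarith
    have hle : sInf (A (a • y1 + b • y3)) ≤ a * ε1 + b * ε3 :=
      csInf_le (hbdd _) hmem
    have h1 : a * ε1 ≤ a * (sInf (A y1) + δ) :=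
      mul_le_mul_of_nonneg_left hε1.le ha
    have h3 : b * ε3 ≤ b * (sInf (A y3) + δ) :=
      mul_le_mul_of_nonneg_left hε3.le hb
    simp only [smul_eq_mul] at hle ⊢
    nlinarith
end
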